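/- arXiv:1511.05219 — 5 statements merged into one kernel-verified Lean document; each statement's English description precedes it below -/
import Mathlib

section
/- Let P and Q be probability measures on a common measurable space with P absolutely continuous with respect to Q. Then the KL divergence satisfies the variational formula D(P ‖ Q) = sup over random variables X of (E_P[X] − log E_Q[e^X]), where the supremum is over all X such that E_P[X] is well-defined and e^X is Q-integrable. -/
open MeasureTheory ProbabilityTheory Real

/-- Kullback–Leibler divergence `∫ log (dP/dQ) dP` (real-valued). -/
noncomputable def klDivReal {α : Type*} [MeasurableSpace α] (P Q : Measure α) : ℝ :=
  ∫ x, llr P Q x ∂P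

/-- Mutual information `I(X; Y)`: KL divergence between the joint law and the
product of the marginals. -/
noncomputable def mutualInfo {Ω α β : Type*} [MeasurableSpace Ω] [MeasurableSpace α]
    [MeasurableSpace β] (μ : Measure Ω) (X : Ω → α) (Y : Ω → β) : ℝ :=
  klDivReal (μ.map fun ω => (X ω, Y ω)) ((μ.map X).prod (μ.map Y))

/-- `X` is `σ`-sub-Gaussian (around zero): `E[exp (λ X)] ≤ exp (λ² σ² / 2)` for all `λ`. -/
def IsSubGaussian {Ω : Type*} [MeasurableSpace Ω] (μ : Measure Ω) (X : Ω → ℝ) (σ : ℝ) : Prop :=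
  ∀ l : ℝ, ∫ ω, Real.exp (l * X ω) ∂μ ≤ Real.exp (l ^ 2 * σ ^ 2 / 2)

section DVaux
variable {α : Type*} [MeasurableSpace α] {P Q : Measure α}

lemma dv_neg_llr_le [IsProbabilityMeasure P] [IsProbabilityMeasure Q] (hPQ : P ≪ Q) :
    ∀ᵐ x ∂P, -llr P Q x ≤ (Q.rnDeriv P x).toReal - 1 := by
  filter_upwards [exp_neg_llr hPQ] with x hx
  have h := Real.add_one_le_exp (-llr P Q x)
  rw [hx] at h
  linarith

lemma dv_integral_llr_nonneg [IsProbabilityMeasure P] [IsProbabilityMeasure Q]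
    (hPQ : P ≪ Q) (h : Integrable (llr P Q) P) : 0 ≤ ∫ x, llr P Q x ∂P := by
  have hint : Integrable (fun x ↦ (Q.rnDeriv P x).toReal) P := Measure.integrable_toReal_rnDeriv
  have hmono : ∫ x, -llr P Q x ∂P ≤ ∫ x, ((Q.rnDeriv P x).toReal - 1) ∂P :=
    integral_mono_ae h.neg (hint.sub (integrable_const 1)) (dv_neg_llr_le hPQ)
  rw [integral_neg] at hmono
  have h2 : ∫ x, ((Q.rnDeriv P x).toReal - 1) ∂P ≤ 0 := by
    rw [integral_sub hint (integrable_const 1)]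
    simp only [integral_const, measure_univ, probReal_univ, ENNReal.toReal_one, smul_eq_mul, one_mul]
    have h3 := Measure.integral_toReal_rnDeriv' (μ := Q) (ν := P)
    have h4 : (Q.singularPart P Set.univ).toReal ≥ 0 := ENNReal.toReal_nonneg
    simp only [measure_univ, probReal_univ, ENNReal.toReal_one, Measure.real] at h3
    linarith
  linarith

lemma dv_gibbs [IsProbabilityMeasure P] [IsProbabilityMeasure Q] (hPQ : P ≪ Q)
    (hllr : Integrable (llr P Q) P) {f : α → ℝ} (hf : Integrable f P)
    (hfQ : Integrable (fun x => Real.exp (f x)) Q) :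
    ∫ x, f x ∂P - Real.log (∫ x, Real.exp (f x) ∂Q) ≤ ∫ x, llr P Q x ∂P := by
  have hprob : IsProbabilityMeasure (Q.tilted f) := isProbabilityMeasure_tilted hfQ
  have hac : P ≪ Q.tilted f := hPQ.trans (absolutelyContinuous_tilted hfQ)
  have hint := integrable_llr_tilted_right hPQ hf hllr hfQ
  have h0 := dv_integral_llr_nonneg hac hint
  rw [integral_llr_tilted_right hPQ hf hfQ hllr] at h0
  linarith

lemma dv_exp_llr_le [IsProbabilityMeasure P] :
    ∀ᵐ x ∂Q, Real.exp (llr P Q x) ≤ 1 + (P.rnDeriv Q x).toReal := by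
  filter_upwards [exp_llr P Q] with x hx
  rw [hx]
  split_ifs with hzero
  · simp
  · nlinarith [ENNReal.toReal_nonneg (a := P.rnDeriv Q x)]

end DVaux

theorem klDiv_eq_iSup_donsker_varadhan'
    {α : Type*} [MeasurableSpace α] (P Q : Measure α)
    [IsProbabilityMeasure P] [IsProbabilityMeasure Q] (hPQ : P ≪ Q) :
    (∫ x, llr P Q x ∂P : ℝ) =
      ⨆ X : {X : α → ℝ // Integrable X P ∧ Integrable (fun a => Real.exp (X a)) Q},
        (∫ a, X.1 a ∂P - Real.log (∫ a, Real.exp (X.1 a) ∂Q)) := by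
  classical
  have h_toReal_int_Q : Integrable (fun x => (P.rnDeriv Q x).toReal) Q :=
    Measure.integrable_toReal_rnDeriv
  have h_toReal_int_P : Integrable (fun x => (Q.rnDeriv P x).toReal) P :=
    Measure.integrable_toReal_rnDeriv
  have h_int_toReal : ∫ x, (P.rnDeriv Q x).toReal ∂Q = 1 := by
    rw [Measure.integral_toReal_rnDeriv hPQ]; simp
  haveI hne : Nonempty {X : α → ℝ // Integrable X P ∧ Integrable (fun a => Real.exp (X a)) Q} :=
    ⟨⟨fun _ => (0:ℝ), integrable_const 0, by simpa using integrable_const (1:ℝ)⟩⟩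
  by_cases h : Integrable (llr P Q) P
  · -- finite KL case
    have hbdd : BddAbove (Set.range fun X :
        {X : α → ℝ // Integrable X P ∧ Integrable (fun a => Real.exp (X a)) Q} =>
        ∫ a, X.1 a ∂P - Real.log (∫ a, Real.exp (X.1 a) ∂Q)) := by
      refine ⟨∫ x, llr P Q x ∂P, ?_⟩
      rintro _ ⟨X, rfl⟩
      exact dv_gibbs hPQ h X.2.1 X.2.2
    refine le_antisymm (le_of_forall_pos_le_add fun ε hε => ?_)
      (ciSup_le fun X => dv_gibbs hPQ h X.2.1 X.2.2)
    set s : Set α := {x | P.rnDeriv Q x = 0} with hs_def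
    have hs : MeasurableSet s := Measure.measurable_rnDeriv P Q (measurableSet_singleton 0)
    set c : ℝ := (Q s).toReal with hc_def
    have hc0 : 0 ≤ c := ENNReal.toReal_nonneg
    obtain ⟨n, hn⟩ := exists_nat_gt (c / ε)
    set f : α → ℝ := fun x => llr P Q x - (n : ℝ) * s.indicator (fun _ => (1:ℝ)) x with hf_def
    have hfeq : f =ᵐ[P] llr P Q := by
      filter_upwards [Measure.rnDeriv_pos hPQ] with x hx
      have hxs : x ∉ s := fun hmem => absurd hmem (by simpa [hs_def] using hx.ne')
      simp [hf_def, Set.indicator_of_notMem hxs]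
    have hf_int : Integrable f P := h.congr hfeq.symm
    have h_exp_eq : (fun x => Real.exp (f x)) =ᵐ[Q]
        fun x => (P.rnDeriv Q x).toReal
          + Real.exp (-(n:ℝ)) * s.indicator (fun _ => (1:ℝ)) x := by
      filter_upwards [Measure.rnDeriv_lt_top P Q] with x hx
      by_cases hx0 : P.rnDeriv Q x = 0
      · have hxs : x ∈ s := hx0
        simp [hf_def, Set.indicator_of_mem hxs, llr, hx0]
      · have hxs : x ∉ s := hx0
        have hpos : 0 < (P.rnDeriv Q x).toReal := ENNReal.toReal_pos hx0 hx.ne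
        simp [hf_def, Set.indicator_of_notMem hxs, llr, Real.exp_log hpos]
    have h_exp_int : Integrable (fun x => Real.exp (f x)) Q :=
      (h_toReal_int_Q.add ((((integrable_const (1:ℝ)).indicator hs)).const_mul _)).congr
        h_exp_eq.symm
    have h_exp_val : ∫ x, Real.exp (f x) ∂Q = 1 + Real.exp (-(n:ℝ)) * c := by
      rw [integral_congr_ae h_exp_eq,
        integral_add h_toReal_int_Q ((((integrable_const (1:ℝ)).indicator hs)).const_mul _),
        h_int_toReal, integral_const_mul, integral_indicator_const (1:ℝ) hs]
      simp [hc_def, Measure.real]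
    have h_int_val : ∫ x, f x ∂P = ∫ x, llr P Q x ∂P := integral_congr_ae hfeq
    have hX : ∫ a, f a ∂P - Real.log (∫ a, Real.exp (f a) ∂Q) ≤
        ⨆ X : {X : α → ℝ // Integrable X P ∧ Integrable (fun a => Real.exp (X a)) Q},
          (∫ a, X.1 a ∂P - Real.log (∫ a, Real.exp (X.1 a) ∂Q)) :=
      le_ciSup hbdd (⟨f, hf_int, h_exp_int⟩ :
        {X : α → ℝ // Integrable X P ∧ Integrable (fun a => Real.exp (X a)) Q})
    have hlog : Real.log (∫ x, Real.exp (f x) ∂Q) ≤ ε := by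
      rw [h_exp_val]
      have h1 : 0 < 1 + Real.exp (-(n:ℝ)) * c := by positivity
      have hen : (n:ℝ) + 1 ≤ Real.exp n := Real.add_one_le_exp (n:ℝ)
      have h2 : Real.exp (-(n:ℝ)) ≤ ((n:ℝ)+1)⁻¹ := by
        rw [Real.exp_neg]
        exact inv_anti₀ (by positivity) hen
      have h5 : c < (n:ℝ) * ε := by
        have := (div_lt_iff₀ hε).mp hn
        linarith
      have h4 : Real.exp (-(n:ℝ)) * c ≤ ε := by
        have h6 : Real.exp (-(n:ℝ)) * c ≤ ((n:ℝ)+1)⁻¹ * c := mul_le_mul_of_nonneg_right h2 hc0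
        have h7 : ((n:ℝ)+1)⁻¹ * c ≤ ε := by
          rw [inv_mul_le_iff₀ (by positivity)]
          nlinarith
        linarith
      have := Real.log_le_sub_one_of_pos h1
      linarith
    rw [h_int_val] at hX
    linarith
  · -- infinite KL case
    rw [integral_undef h, eq_comm]
    apply Real.iSup_of_not_bddAbove
    rintro ⟨B, hB⟩
    set t : α → ℝ := fun x => (Q.rnDeriv P x).toReal with ht_def
    have ht_nonneg : ∀ x, 0 ≤ t x := fun x => ENNReal.toReal_nonneg
    have ht_meas : Measurable t := (Measure.measurable_rnDeriv Q P).ennreal_toReal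
    have h_llr_ge : ∀ᵐ x ∂P, -t x ≤ llr P Q x := by
      filter_upwards [dv_neg_llr_le hPQ] with x hx
      simp only [ht_def]
      linarith
    have hmin_meas : ∀ n : ℕ, Measurable fun x => min (llr P Q x) (n:ℝ) := fun n =>
      (measurable_llr P Q).min measurable_const
    have hmin_int : ∀ n : ℕ, Integrable (fun x => min (llr P Q x) (n:ℝ)) P := fun n => by
      have hb : Integrable (fun x => (n:ℝ) + t x) P := (integrable_const _).add h_toReal_int_P
      refine Integrable.mono' hb (hmin_meas n).aestronglyMeasurable ?_
      filter_upwards [h_llr_ge] with x hx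
      have h0 : (0:ℝ) ≤ (n:ℝ) := Nat.cast_nonneg n
      have h1 : -t x ≤ min (llr P Q x) (n:ℝ) :=
        le_min hx (le_trans (neg_nonpos.mpr (ht_nonneg x)) h0)
      have h2 : min (llr P Q x) (n:ℝ) ≤ (n:ℝ) := min_le_right _ _
      rw [Real.norm_eq_abs, abs_le]
      exact ⟨by linarith [ht_nonneg x], by linarith [ht_nonneg x]⟩
    have key : ∀ n : ℕ, ∫ x, min (llr P Q x) (n:ℝ) ∂P ≤ B + Real.log 2 := by
      intro n
      have hge : ∀ᵐ x ∂Q, Real.exp (min (llr P Q x) (n:ℝ)) ≤ 1 + (P.rnDeriv Q x).toReal := by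
        filter_upwards [dv_exp_llr_le (P := P) (Q := Q)] with x hx
        exact (Real.exp_le_exp.mpr (min_le_left _ _)).trans hx
      have hb2 : Integrable (fun x => 1 + ((P.rnDeriv Q) x).toReal) Q :=
        (integrable_const _).add h_toReal_int_Q
      have hg_exp_int : Integrable (fun x => Real.exp (min (llr P Q x) (n:ℝ))) Q := by
        refine Integrable.mono' hb2 ((hmin_meas n).exp).aestronglyMeasurable ?_
        filter_upwards [hge] with x hx
        rw [Real.norm_eq_abs, abs_of_pos (Real.exp_pos _)]
        exact hx
      have hg_exp_le : ∫ x, Real.exp (min (llr P Q x) (n:ℝ)) ∂Q ≤ 2 := by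
        have := integral_mono_ae hg_exp_int hb2 hge
        rw [integral_add (integrable_const 1) h_toReal_int_Q, integral_const, h_int_toReal,
          probReal_univ, smul_eq_mul, one_mul] at this
        linarith
      have hpos : 0 < ∫ x, Real.exp (min (llr P Q x) (n:ℝ)) ∂Q := integral_exp_pos hg_exp_int
      have hlog : Real.log (∫ x, Real.exp (min (llr P Q x) (n:ℝ)) ∂Q) ≤ Real.log 2 :=
        Real.log_le_log hpos hg_exp_le
      have hBn := hB ⟨(⟨fun x => min (llr P Q x) (n:ℝ), hmin_int n, hg_exp_int⟩ :
        {X : α → ℝ // Integrable X P ∧ Integrable (fun a => Real.exp (X a)) Q}), rfl⟩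
      simp only at hBn
      linarith
    have h_sum_int : ∀ n : ℕ, Integrable (fun x => min (llr P Q x) (n:ℝ) + t x) P := fun n =>
      (hmin_int n).add h_toReal_int_P
    have h_sum_nonneg : ∀ n : ℕ, 0 ≤ᵐ[P] fun x => min (llr P Q x) (n:ℝ) + t x := fun n => by
      filter_upwards [h_llr_ge] with x hx
      have h1 : -t x ≤ min (llr P Q x) (n:ℝ) :=
        le_min hx (le_trans (neg_nonpos.mpr (ht_nonneg x)) (Nat.cast_nonneg n))
      simp only [Pi.zero_apply]
      linarith
    set C : ℝ := B + Real.log 2 + ∫ x, t x ∂P with hC_def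
    have h_lint_le : ∀ n : ℕ,
        ∫⁻ x, ENNReal.ofReal (min (llr P Q x) (n:ℝ) + t x) ∂P ≤ ENNReal.ofReal C := fun n => by
      rw [← ofReal_integral_eq_lintegral_ofReal (h_sum_int n) (h_sum_nonneg n)]
      apply ENNReal.ofReal_le_ofReal
      rw [integral_add (hmin_int n) h_toReal_int_P]
      exact add_le_add_left (key n) _
    have hsup_eq : ∀ x, (⨆ n : ℕ, ENNReal.ofReal (min (llr P Q x) (n:ℝ) + t x))
        = ENNReal.ofReal (llr P Q x + t x) := by
      intro x
      apply le_antisymm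
      · exact iSup_le fun m => ENNReal.ofReal_le_ofReal
          (add_le_add_left (min_le_left _ _) _)
      · obtain ⟨n, hn⟩ := exists_nat_ge (llr P Q x)
        have heq : ENNReal.ofReal (llr P Q x + t x)
            = ENNReal.ofReal (min (llr P Q x) (n:ℝ) + t x) := by
          rw [min_eq_left hn]
        rw [heq]
        exact le_iSup (fun n : ℕ => ENNReal.ofReal (min (llr P Q x) (n:ℝ) + t x)) n
    have hmono : Monotone fun (n : ℕ) (x : α) => ENNReal.ofReal (min (llr P Q x) (n:ℝ) + t x) := by
      intro m n hmn
      intro x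
      exact ENNReal.ofReal_le_ofReal
        (add_le_add_left (min_le_min le_rfl (Nat.cast_le.mpr hmn)) _)
    have hfin : ∫⁻ x, ENNReal.ofReal (llr P Q x + t x) ∂P ≤ ENNReal.ofReal C := by
      calc ∫⁻ x, ENNReal.ofReal (llr P Q x + t x) ∂P
          = ∫⁻ x, ⨆ n : ℕ, ENNReal.ofReal (min (llr P Q x) (n:ℝ) + t x) ∂P := by
            simp_rw [hsup_eq]
        _ = ⨆ n : ℕ, ∫⁻ x, ENNReal.ofReal (min (llr P Q x) (n:ℝ) + t x) ∂P :=
            lintegral_iSup (fun n => ((hmin_meas n).add ht_meas).ennreal_ofReal) hmono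
        _ ≤ ENNReal.ofReal C := iSup_le h_lint_le
    have h_sum_int' : Integrable (fun x => llr P Q x + t x) P := by
      refine ⟨((measurable_llr P Q).add ht_meas).aestronglyMeasurable, ?_⟩
      rw [hasFiniteIntegral_iff_ofReal ?_]
      · exact lt_of_le_of_lt hfin ENNReal.ofReal_lt_top
      · filter_upwards [h_llr_ge] with x hx
        simp only [Pi.zero_apply]
        linarith
    exact h ((h_sum_int'.sub h_toReal_int_P).congr
      (Filter.Eventually.of_forall fun x => by simp [ht_def]))

theorem klDiv_eq_iSup_donsker_varadhan
    {α : Type*} [MeasurableSpace α] (P Q : Measure α)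
    [IsProbabilityMeasure P] [IsProbabilityMeasure Q] (hPQ : P ≪ Q) :
    klDivReal P Q =
      ⨆ X : {X : α → ℝ // Integrable X P ∧ Integrable (fun a => Real.exp (X a)) Q},
        (∫ a, X.1 a ∂P - Real.log (∫ a, Real.exp (X.1 a) ∂Q)) := by
  rw [klDivReal]
  exact klDiv_eq_iSup_donsker_varadhan' P Q hPQ
end

section
/- Let X be a real random variable with variance σ_X², and let W ~ N(0, σ_W²) be a Gaussian random variable independent of X. Then the mutual information satisfies I(X; X + W) ≤ σ_X² / σ_W². -/
open MeasureTheory ProbabilityTheory Real NNReal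

open Set
open scoped ENNReal

section Auxiliary

variable {v : ℝ≥0}

lemma sqrt2piv_pos (hv : v ≠ 0) : 0 < Real.sqrt (2 * π * v) := by
  have : (0:ℝ) < v := by positivity
  have h : (0:ℝ) < 2 * π * v := by positivity
  exact Real.sqrt_pos.mpr h

lemma gpdf_le (v : ℝ≥0) (x : ℝ) : gaussianPDFReal 0 v x ≤ (Real.sqrt (2 * π * v))⁻¹ := by
  rw [gaussianPDFReal]
  have h1 : rexp (-(x - 0) ^ 2 / (2 * v)) ≤ 1 := by
    apply Real.exp_le_one_iff.mpr
    apply div_nonpos_of_nonpos_of_nonneg (neg_nonpos.mpr (sq_nonneg _)) (by positivity)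
  calc (Real.sqrt (2 * π * v))⁻¹ * rexp (-(x - 0) ^ 2 / (2 * v))
      ≤ (Real.sqrt (2 * π * v))⁻¹ * 1 := by
        apply mul_le_mul_of_nonneg_left h1 (by positivity)
    _ = _ := mul_one _

lemma log_gpdf (hv : v ≠ 0) (x : ℝ) :
    Real.log (gaussianPDFReal 0 v x)
      = - x ^ 2 / (2 * v) - Real.log (Real.sqrt (2 * π * v)) := by
  have h := sqrt2piv_pos hv
  rw [gaussianPDFReal, Real.log_mul (ne_of_gt (inv_pos.mpr h)) (Real.exp_ne_zero _),
    Real.log_inv, Real.log_exp]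
  ring_nf

lemma integrable_mul_gpdf (hv : v ≠ 0) {F : ℝ → ℝ}
    (hInt : Integrable (fun x => F x * gaussianPDFReal 0 v x) volume) :
    Integrable F (gaussianReal 0 v) := by
  rw [gaussianReal_of_var_ne_zero 0 hv]
  rw [integrable_withDensity_iff (measurable_gaussianPDF 0 v)
    (ae_of_all _ fun x => ENNReal.ofReal_lt_top)]
  convert hInt using 2 with x
  case e'_5 => rfl
  case e'_6 => rw [gaussianPDF, ENNReal.toReal_ofReal (gaussianPDFReal_nonneg 0 v x)]

lemma integrable_pow_gaussian (hv : v ≠ 0) (n : ℕ) :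
    Integrable (fun x => x ^ n) (gaussianReal 0 v) := by
  apply integrable_mul_gpdf hv
  have hvpos : (0:ℝ) < v := by positivity
  have hb : (0:ℝ) < (2 * (v:ℝ))⁻¹ := by positivity
  have h := (integrable_rpow_mul_exp_neg_mul_sq hb (s := n) (by
    have : (0:ℝ) ≤ n := Nat.cast_nonneg n
    linarith)).const_mul ((Real.sqrt (2 * π * v))⁻¹)
  convert h using 2 with x
  rw [gaussianPDFReal, Real.rpow_natCast]
  have : -(x - 0) ^ 2 / (2 * (v:ℝ)) = -(2 * (v:ℝ))⁻¹ * x ^ 2 := by ring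
  rw [this]
  ring

lemma integrable_sq_gaussian (hv : v ≠ 0) :
    Integrable (fun x => x ^ 2) (gaussianReal 0 v) := integrable_pow_gaussian hv 2

lemma integrable_id_gaussian (hv : v ≠ 0) :
    Integrable (fun x => x) (gaussianReal 0 v) := by
  simpa using integrable_pow_gaussian hv 1


lemma gauss_slice (hv : v ≠ 0) (x : ℝ) {A : Set ℝ} (hA : MeasurableSet A) :
    gaussianReal 0 v ((fun w => x + w) ⁻¹' A)
      = ∫⁻ y, A.indicator (fun y => gaussianPDF 0 v (y - x)) y ∂volume := by
  have hmap : (gaussianReal 0 v).map (fun w => x + w) = gaussianReal x v := by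
    simpa using gaussianReal_map_const_add (μ := 0) (v := v) x
  have h1 : gaussianReal 0 v ((fun w => x + w) ⁻¹' A) = gaussianReal x v A := by
    rw [← hmap, Measure.map_apply (measurable_const_add x) hA]
  rw [h1, gaussianReal_apply x hv A, ← lintegral_indicator hA]
  congr 1
  ext y
  by_cases hy : y ∈ A
  · simp only [Set.indicator_of_mem hy]
    rw [gaussianPDF, gaussianPDF, gaussianPDFReal_sub, zero_add]
  · simp [Set.indicator_of_notMem hy]

section WithMeasure

variable (ν : Measure ℝ) [IsProbabilityMeasure ν]

lemma fbar_measurable(v : ℝ≥0) :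
    Measurable (fun y => ∫⁻ x, gaussianPDF 0 v (y - x) ∂ν) := by
  apply Measurable.lintegral_prod_right'
    (f := fun p : ℝ × ℝ => gaussianPDF 0 v (p.1 - p.2))
  exact (measurable_gaussianPDF 0 v).comp (measurable_fst.sub measurable_snd)

lemma fbar_ne_zero (hv : v ≠ 0) (y : ℝ) :
    (∫⁻ x, gaussianPDF 0 v (y - x) ∂ν) ≠ 0 := by
  have h : 0 < ∫⁻ x, gaussianPDF 0 v (y - x) ∂ν := by
    rw [lintegral_pos_iff_support
      (f := fun x => gaussianPDF 0 v (y - x))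
      ((measurable_gaussianPDF 0 v).comp (measurable_const.sub measurable_id))]
    have : (Function.support fun x => gaussianPDF 0 v (y - x)) = Set.univ := by
      ext x
      simp [Function.mem_support, (gaussianPDF_pos 0 hv (y - x)).ne']
    rw [this]
    simp
  exact h.ne'

lemma fbar_ne_top (y : ℝ) :
    (∫⁻ x, gaussianPDF 0 v (y - x) ∂ν) ≠ ⊤ := by
  have hle : (∫⁻ x, gaussianPDF 0 v (y - x) ∂ν)
      ≤ ∫⁻ _, ENNReal.ofReal ((Real.sqrt (2 * π * v))⁻¹) ∂ν := by
    apply lintegral_mono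
    intro x
    exact ENNReal.ofReal_le_ofReal (gpdf_le v (y - x))
  rw [lintegral_const] at hle
  exact (lt_of_le_of_lt hle (by simp [ENNReal.mul_lt_top, ENNReal.ofReal_lt_top])).ne

lemma nuY_eq (hv : v ≠ 0) :
    (ν.prod (gaussianReal 0 v)).map (fun p => p.1 + p.2)
      = volume.withDensity (fun y => ∫⁻ x, gaussianPDF 0 v (y - x) ∂ν) := by
  ext B hB
  rw [Measure.map_apply (f := fun p : ℝ × ℝ => p.1 + p.2) (measurable_fst.add measurable_snd) hB,
    Measure.prod_apply (s := (fun p : ℝ × ℝ => p.1 + p.2) ⁻¹' B) ((measurable_fst.add measurable_snd) hB)]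
  have h1 : ∀ x : ℝ, (Prod.mk x ⁻¹' ((fun p : ℝ × ℝ => p.1 + p.2) ⁻¹' B))
      = (fun w => x + w) ⁻¹' B := by intro x; rfl
  calc ∫⁻ x, gaussianReal 0 v (Prod.mk x ⁻¹' ((fun p : ℝ × ℝ => p.1 + p.2) ⁻¹' B)) ∂ν
      = ∫⁻ x, ∫⁻ y, B.indicator (fun y => gaussianPDF 0 v (y - x)) y ∂volume ∂ν := by
        refine lintegral_congr fun x => ?_
        rw [h1 x, gauss_slice hv x hB]
    _ = ∫⁻ y, ∫⁻ x, B.indicator (fun y => gaussianPDF 0 v (y - x)) y ∂ν ∂volume := by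
        rw [lintegral_lintegral_swap]
        apply Measurable.aemeasurable
        apply Measurable.indicator
        · exact (measurable_gaussianPDF 0 v).comp (measurable_snd.sub measurable_fst)
        · exact measurable_snd hB
    _ = ∫⁻ y, B.indicator (fun y => ∫⁻ x, gaussianPDF 0 v (y - x) ∂ν) y ∂volume := by
        refine lintegral_congr fun y => ?_
        by_cases hy : y ∈ B
        · simp [Set.indicator_of_mem hy]
        · simp [Set.indicator_of_notMem hy]
    _ = _ := by
        rw [withDensity_apply _ hB, ← lintegral_indicator hB]

lemma joint_eq (hv : v ≠ 0) :
    (ν.prod (gaussianReal 0 v)).map (fun p => (p.1, p.1 + p.2))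
      = (ν.prod (volume.withDensity (fun y => ∫⁻ x, gaussianPDF 0 v (y - x) ∂ν))).withDensity
          (fun p => gaussianPDF 0 v (p.2 - p.1) / ∫⁻ x, gaussianPDF 0 v (p.2 - x) ∂ν) := by
  have hT : Measurable (fun p : ℝ × ℝ => (p.1, p.1 + p.2)) :=
    measurable_fst.prodMk (measurable_fst.add measurable_snd)
  have hrho : Measurable (fun p : ℝ × ℝ => gaussianPDF 0 v (p.2 - p.1)) :=
    (measurable_gaussianPDF 0 v).comp (measurable_snd.sub measurable_fst)
  have hfbar2 : Measurable (fun p : ℝ × ℝ => ∫⁻ x, gaussianPDF 0 v (p.2 - x) ∂ν) :=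
    (fbar_measurable ν v).comp measurable_snd
  have hh : Measurable (fun p : ℝ × ℝ =>
      gaussianPDF 0 v (p.2 - p.1) / ∫⁻ x, gaussianPDF 0 v (p.2 - x) ∂ν) :=
    hrho.div hfbar2
  ext s hs
  rw [Measure.map_apply hT hs, Measure.prod_apply (hT hs), withDensity_apply _ hs,
    ← lintegral_indicator hs, lintegral_prod _ (hh.indicator hs).aemeasurable]
  refine lintegral_congr fun x => ?_
  have hsec : MeasurableSet {y : ℝ | (x, y) ∈ s} := measurable_prodMk_left hs
  have h1 : Prod.mk x ⁻¹' ((fun p : ℝ × ℝ => (p.1, p.1 + p.2)) ⁻¹' s)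
      = (fun w => x + w) ⁻¹' {y : ℝ | (x, y) ∈ s} := rfl
  have hin : ∫⁻ y, s.indicator (fun p : ℝ × ℝ =>
        gaussianPDF 0 v (p.2 - p.1) / ∫⁻ x, gaussianPDF 0 v (p.2 - x) ∂ν) (x, y)
        ∂(volume.withDensity (fun y => ∫⁻ x, gaussianPDF 0 v (y - x) ∂ν))
      = ∫⁻ y, (∫⁻ x', gaussianPDF 0 v (y - x') ∂ν) * s.indicator (fun p : ℝ × ℝ =>
        gaussianPDF 0 v (p.2 - p.1) / ∫⁻ x, gaussianPDF 0 v (p.2 - x) ∂ν) (x, y) ∂volume :=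
    lintegral_withDensity_eq_lintegral_mul _ (fbar_measurable ν v)
      ((hh.indicator hs).comp measurable_prodMk_left)
  rw [h1, gauss_slice hv x hsec, hin]
  refine lintegral_congr fun y => ?_
  by_cases hy : (x, y) ∈ s
  · simp only [Set.indicator_of_mem hy, Set.indicator_of_mem (show y ∈ {y | (x,y) ∈ s} from hy)]
    rw [ENNReal.mul_div_cancel (fbar_ne_zero ν hv y) (fbar_ne_top ν y)]
  · simp only [Set.indicator_of_notMem hy,
      Set.indicator_of_notMem (show y ∉ {y | (x,y) ∈ s} from hy), mul_zero]

lemma f_integrable (y : ℝ) :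
    Integrable (fun x => gaussianPDFReal 0 v (y - x)) ν := by
  apply Integrable.mono' (integrable_const ((Real.sqrt (2 * π * v))⁻¹))
  · exact ((measurable_gaussianPDFReal 0 v).comp (measurable_const.sub measurable_id)).aestronglyMeasurable
  · refine ae_of_all _ fun x => ?_
    rw [Real.norm_eq_abs, abs_of_nonneg (gaussianPDFReal_nonneg 0 v _)]
    exact gpdf_le v _

lemma fbar_eq_ofReal (y : ℝ) :
    (∫⁻ x, gaussianPDF 0 v (y - x) ∂ν)
      = ENNReal.ofReal (∫ x, gaussianPDFReal 0 v (y - x) ∂ν) := by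
  rw [ofReal_integral_eq_lintegral_ofReal (f_integrable ν y)
    (ae_of_all _ fun x => gaussianPDFReal_nonneg 0 v _)]
  rfl

lemma f_pos (hv : v ≠ 0) (y : ℝ) : 0 < ∫ x, gaussianPDFReal 0 v (y - x) ∂ν := by
  by_contra h
  exact fbar_ne_zero ν hv y (by
    rw [fbar_eq_ofReal ν y, ENNReal.ofReal_eq_zero]
    linarith)

lemma f_le (y : ℝ) :
    (∫ x, gaussianPDFReal 0 v (y - x) ∂ν) ≤ (Real.sqrt (2 * π * v))⁻¹ := by
  calc (∫ x, gaussianPDFReal 0 v (y - x) ∂ν)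
      ≤ ∫ _, (Real.sqrt (2 * π * v))⁻¹ ∂ν :=
        integral_mono (f_integrable ν y) (integrable_const _) (fun x => gpdf_le v _)
    _ = (Real.sqrt (2 * π * v))⁻¹ := by simp

lemma log_f_ge (hv : v ≠ 0) (hm : Integrable (fun x => x) ν)
    (hs2 : Integrable (fun x => x ^ 2) ν) (y : ℝ) :
    - Real.log (Real.sqrt (2 * π * v))
        - (y ^ 2 - 2 * y * (∫ x, x ∂ν) + (∫ x, x ^ 2 ∂ν)) / (2 * v)
      ≤ Real.log (∫ x, gaussianPDFReal 0 v (y - x) ∂ν) := by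
  set c := Real.log (Real.sqrt (2 * π * v)) with hc
  set u : ℝ → ℝ := fun x => -(y - x) ^ 2 / (2 * v) - c with hu
  have hvne : (2 * (v:ℝ)) ≠ 0 := by
    have : (0:ℝ) < v := by positivity
    positivity
  have hu_eq : u = fun x => ((2 * (v:ℝ))⁻¹ * (2 * y)) * x + ((-(2 * (v:ℝ))⁻¹) * x ^ 2)
      + (-(2 * (v:ℝ))⁻¹ * y ^ 2 - c) := by
    funext x
    simp only [hu]
    field_simp
    ring
  have hu_int : Integrable u ν := by
    rw [hu_eq]
    exact (((hm.const_mul _).add (hs2.const_mul _)).add (integrable_const _))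
  have h_exp_u : ∀ x, rexp (u x) = gaussianPDFReal 0 v (y - x) := fun x => by
    rw [hu]
    simp only
    rw [← log_gpdf hv (y - x), Real.exp_log (gaussianPDFReal_pos 0 v _ hv)]
  have hjensen : rexp (∫ x, u x ∂ν) ≤ ∫ x, rexp (u x) ∂ν := by
    have := convexOn_exp.map_integral_le (μ := ν) (f := u)
      continuous_exp.continuousOn isClosed_univ
      (ae_of_all _ fun x => Set.mem_univ _) hu_int
      (by
        have : (fun x => rexp (u x)) = fun x => gaussianPDFReal 0 v (y - x) :=
          funext h_exp_u
        rw [Function.comp_def, this]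
        exact f_integrable ν y)
    simpa using this
  have h_exp_int : (∫ x, rexp (u x) ∂ν) = ∫ x, gaussianPDFReal 0 v (y - x) ∂ν := by
    congr 1
    exact funext h_exp_u
  have h_int_u : ∫ x, u x ∂ν
      = ((2 * (v:ℝ))⁻¹ * (2 * y)) * (∫ x, x ∂ν) + (-(2 * (v:ℝ))⁻¹) * (∫ x, x ^ 2 ∂ν)
        + (-(2 * (v:ℝ))⁻¹ * y ^ 2 - c) := by
    rw [hu_eq]
    beta_reduce
    have i1 : Integrable (fun x => (2 * (v:ℝ))⁻¹ * (2 * y) * x + -(2 * (v:ℝ))⁻¹ * x ^ 2) ν := by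
      exact (hm.const_mul _).add (hs2.const_mul _)
    rw [integral_add i1 (integrable_const _),
      integral_add (hm.const_mul _) (hs2.const_mul _), integral_const_mul, integral_const_mul,
      integral_const]
    simp
  have hle : ∫ x, u x ∂ν ≤ Real.log (∫ x, gaussianPDFReal 0 v (y - x) ∂ν) := by
    rw [Real.le_log_iff_exp_le (f_pos ν hv y)]
    rw [h_exp_int] at hjensen
    exact hjensen
  refine le_trans (le_of_eq ?_) hle
  rw [h_int_u]
  field_simp
  ring

lemma aux_bound (ν : Measure ℝ) [IsProbabilityMeasure ν] (hv : v ≠ 0)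
    (hm : Integrable (fun x => x) ν) (hs2 : Integrable (fun x => x ^ 2) ν) :
    klDivReal ((ν.prod (gaussianReal 0 v)).map (fun p => (p.1, p.1 + p.2)))
      (ν.prod ((ν.prod (gaussianReal 0 v)).map (fun p => p.1 + p.2)))
      ≤ ((∫ x, x ^ 2 ∂ν) - (∫ x, x ∂ν) ^ 2) / v := by
  have hvpos : (0:ℝ) < v := by positivity
  set G : Measure ℝ := gaussianReal 0 v with hG
  set Pi : Measure (ℝ × ℝ) := ν.prod G with hPi
  set fb : ℝ → ℝ≥0∞ := fun y => ∫⁻ x, gaussianPDF 0 v (y - x) ∂ν with hfb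
  set f : ℝ → ℝ := fun y => ∫ x, gaussianPDFReal 0 v (y - x) ∂ν with hf
  set g : ℝ → ℝ := gaussianPDFReal 0 v with hg
  set c : ℝ := Real.log (Real.sqrt (2 * π * v)) with hc
  set m : ℝ := ∫ x, x ∂ν with hm'
  set s : ℝ := ∫ x, x ^ 2 ∂ν with hs'
  set T : ℝ × ℝ → ℝ × ℝ := fun p => (p.1, p.1 + p.2) with hT'
  have hT : Measurable T := measurable_fst.prodMk (measurable_fst.add measurable_snd)
  set P : Measure (ℝ × ℝ) := Pi.map T with hP'
  set Q : Measure (ℝ × ℝ) := ν.prod (Pi.map (fun p => p.1 + p.2)) with hQ'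
  have hsum_meas : Measurable (fun p : ℝ × ℝ => p.1 + p.2) :=
    measurable_fst.add measurable_snd
  haveI : IsProbabilityMeasure (Pi.map (fun p => p.1 + p.2)) :=
    Measure.isProbabilityMeasure_map hsum_meas.aemeasurable
  haveI : IsProbabilityMeasure P := Measure.isProbabilityMeasure_map hT.aemeasurable
  set h : ℝ × ℝ → ℝ≥0∞ :=
    fun p => gaussianPDF 0 v (p.2 - p.1) / ∫⁻ x, gaussianPDF 0 v (p.2 - x) ∂ν with hh'
  have hh : Measurable h :=
    ((measurable_gaussianPDF 0 v).comp (measurable_snd.sub measurable_fst)).div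
      ((fbar_measurable ν v).comp measurable_snd)
  have hPQ : P = Q.withDensity h := by
    rw [hP', hQ', nuY_eq ν hv]
    exact joint_eq ν hv
  have hPac : P ≪ Q := hPQ ▸ withDensity_absolutelyContinuous _ _
  have hrn : P.rnDeriv Q =ᵐ[Q] h := by
    rw [hPQ]
    exact Measure.rnDeriv_withDensity Q hh
  have hrnP : P.rnDeriv Q =ᵐ[P] h := hPac.ae_le hrn
  -- measurability of f
  have hf_meas : Measurable f := by
    have : f = fun y => (fb y).toReal := by
      funext y
      rw [hfb]
      simp only
      rw [fbar_eq_ofReal ν y, ENNReal.toReal_ofReal (le_of_lt (f_pos ν hv y))]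
    rw [this]
    exact (fbar_measurable ν v).ennreal_toReal
  have hg_meas : Measurable g := measurable_gaussianPDFReal 0 v
  -- llr identification
  have hllr : llr P Q =ᵐ[P] fun p => Real.log (g (p.2 - p.1)) - Real.log (f p.2) := by
    filter_upwards [hrnP] with p hp
    rw [llr, hp, hh']
    simp only
    rw [fbar_eq_ofReal ν p.2, gaussianPDF,
      ← ENNReal.ofReal_div_of_pos (f_pos ν hv p.2), ENNReal.toReal_ofReal
        (div_nonneg (gaussianPDFReal_nonneg 0 v _) (le_of_lt (f_pos ν hv p.2))),
      Real.log_div (ne_of_gt (gaussianPDFReal_pos 0 v _ hv)) (ne_of_gt (f_pos ν hv p.2))]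
  -- integrability facts over Pi
  have hfst_map : Pi.map Prod.fst = ν := by
    rw [hPi]
    simp [Measure.map_fst_prod]
  have hsnd_map : Pi.map Prod.snd = G := by
    rw [hPi]
    simp [Measure.map_snd_prod]
  have hfst_int : Integrable (fun p : ℝ × ℝ => p.1) Pi := by
    have := (integrable_map_measure (by rw [hfst_map]; exact hm.aestronglyMeasurable)
      measurable_fst.aemeasurable).mp (by rw [hfst_map]; exact hm)
    exact this
  have hsnd_int : Integrable (fun p : ℝ × ℝ => p.2) Pi := by
    have := (integrable_map_measure (by rw [hsnd_map]; exact (integrable_id_gaussian hv).aestronglyMeasurable)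
      measurable_snd.aemeasurable).mp (by rw [hsnd_map]; exact integrable_id_gaussian hv)
    exact this
  have hfstsq_int : Integrable (fun p : ℝ × ℝ => p.1 ^ 2) Pi := by
    have := (integrable_map_measure (by rw [hfst_map]; exact hs2.aestronglyMeasurable)
      measurable_fst.aemeasurable).mp (by rw [hfst_map]; exact hs2)
    exact this
  have hsndsq_int : Integrable (fun p : ℝ × ℝ => p.2 ^ 2) Pi := by
    have := (integrable_map_measure (by rw [hsnd_map]; exact (integrable_sq_gaussian hv).aestronglyMeasurable)
      measurable_snd.aemeasurable).mp (by rw [hsnd_map]; exact integrable_sq_gaussian hv)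
    exact this
  have hcross_int : Integrable (fun p : ℝ × ℝ => p.1 * p.2) Pi :=
    hm.mul_prod (integrable_id_gaussian hv)
  have hsum_int : Integrable (fun p : ℝ × ℝ => p.1 + p.2) Pi := hfst_int.add hsnd_int
  have hsumsq_int : Integrable (fun p : ℝ × ℝ => (p.1 + p.2) ^ 2) Pi := by
    have : (fun p : ℝ × ℝ => (p.1 + p.2) ^ 2)
        = fun p : ℝ × ℝ => p.1 ^ 2 + 2 * (p.1 * p.2) + p.2 ^ 2 := by
      funext p; ring
    rw [this]
    exact (hfstsq_int.add (hcross_int.const_mul 2)).add hsndsq_int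
  -- moments over Pi
  set mG : ℝ := ∫ w, w ∂G with hmG
  set sG : ℝ := ∫ w, w ^ 2 ∂G with hsG
  have hfst_eq : ∫ p, (p.1 : ℝ) ∂Pi = m := by
    rw [hm', ← hfst_map,
      integral_map (f := fun x : ℝ => x) measurable_fst.aemeasurable measurable_id.aestronglyMeasurable]
  have hsnd_eq : ∫ p, (p.2 : ℝ) ∂Pi = mG := by
    rw [hmG, ← hsnd_map,
      integral_map (f := fun x : ℝ => x) measurable_snd.aemeasurable measurable_id.aestronglyMeasurable]
  have hfstsq_eq : ∫ p, ((p.1 : ℝ)) ^ 2 ∂Pi = s := by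
    rw [hs', ← hfst_map,
      integral_map (f := fun x : ℝ => x ^ 2) measurable_fst.aemeasurable (measurable_id.pow_const 2).aestronglyMeasurable]
  have hsndsq_eq : ∫ p, ((p.2 : ℝ)) ^ 2 ∂Pi = sG := by
    rw [hsG, ← hsnd_map,
      integral_map (f := fun x : ℝ => x ^ 2) measurable_snd.aemeasurable (measurable_id.pow_const 2).aestronglyMeasurable]
  have hcross_eq : ∫ p, (p.1 : ℝ) * p.2 ∂Pi = m * mG := by
    rw [hPi]
    exact integral_prod_mul (fun x => x) (fun x => x)
  have hsum_eq : ∫ p, ((p.1 : ℝ) + p.2) ∂Pi = m + mG := by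
    rw [integral_add hfst_int hsnd_int, hfst_eq, hsnd_eq]
  have hsumsq_eq : ∫ p, ((p.1 : ℝ) + p.2) ^ 2 ∂Pi = s + 2 * (m * mG) + sG := by
    have he : (fun p : ℝ × ℝ => (p.1 + p.2) ^ 2)
        = fun p : ℝ × ℝ => p.1 ^ 2 + 2 * (p.1 * p.2) + p.2 ^ 2 := by
      funext p; ring
    have i1 : Integrable (fun p : ℝ × ℝ => p.1 ^ 2 + 2 * (p.1 * p.2)) Pi := by
      exact hfstsq_int.add (hcross_int.const_mul 2)
    rw [he]
    beta_reduce
    rw [integral_add i1 hsndsq_int, integral_add hfstsq_int (hcross_int.const_mul 2),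
      integral_const_mul, hfstsq_eq, hcross_eq, hsndsq_eq]
  -- the first term
  have hloggG_eq : (fun w : ℝ => Real.log (g w)) = fun w => -(2 * (v:ℝ))⁻¹ * w ^ 2 + -c := by
    funext w
    rw [hg]
    rw [log_gpdf hv w]
    rw [hc]
    field_simp
    ring
  have hlogg_int_G : Integrable (fun w => Real.log (g w)) G := by
    rw [hloggG_eq]
    exact ((integrable_sq_gaussian hv).const_mul _).add (integrable_const _)
  have hA : ∫ w, Real.log (g w) ∂G = -(2 * (v:ℝ))⁻¹ * sG + -c := by
    rw [hloggG_eq]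
    beta_reduce
    rw [integral_add ((integrable_sq_gaussian hv).const_mul _) (integrable_const _),
      integral_const_mul, integral_const, hsG]
    simp
    exact Or.inl rfl
  have hF1_int_Pi : Integrable (fun p : ℝ × ℝ => Real.log (g p.2)) Pi := by
    have := (integrable_map_measure
      (by rw [hsnd_map]; exact hlogg_int_G.aestronglyMeasurable)
      measurable_snd.aemeasurable).mp (by rw [hsnd_map]; exact hlogg_int_G)
    exact this
  have hF1_eq_Pi : ∫ p, Real.log (g p.2) ∂Pi = ∫ w, Real.log (g w) ∂G := by
    rw [← hsnd_map]
    exact (integral_map measurable_snd.aemeasurable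
      (by rw [hsnd_map]; exact hlogg_int_G.aestronglyMeasurable)).symm
  -- the second term
  set q : ℝ → ℝ := fun y => -c - (y ^ 2 - 2 * y * m + s) / (2 * (v:ℝ)) with hq
  have hq_le : ∀ y, q y ≤ Real.log (f y) := fun y => log_f_ge ν hv hm hs2 y
  have hf_le_log : ∀ y, Real.log (f y) ≤ -c := by
    intro y
    have h1 := Real.log_le_log (f_pos ν hv y) (f_le ν y)
    rwa [Real.log_inv] at h1
  have hqcomp_eq : (fun p : ℝ × ℝ => q (p.1 + p.2))
      = fun p : ℝ × ℝ => -(2 * (v:ℝ))⁻¹ * (p.1 + p.2) ^ 2 + (m / (v:ℝ)) * (p.1 + p.2)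
          + (-c - s / (2 * (v:ℝ))) := by
    funext p
    rw [hq]
    simp only
    field_simp
    ring
  have hq_int : Integrable (fun p : ℝ × ℝ => q (p.1 + p.2)) Pi := by
    rw [hqcomp_eq]
    exact ((hsumsq_int.const_mul _).add (hsum_int.const_mul _)).add (integrable_const _)
  have iq1 : Integrable (fun p : ℝ × ℝ =>
      -(2 * (v:ℝ))⁻¹ * (p.1 + p.2) ^ 2 + (m / (v:ℝ)) * (p.1 + p.2)) Pi := by
    exact (hsumsq_int.const_mul _).add (hsum_int.const_mul _)
  have hq_integral : ∫ p, q (p.1 + p.2) ∂Pi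
      = -(2 * (v:ℝ))⁻¹ * (s + 2 * (m * mG) + sG) + (m / (v:ℝ)) * (m + mG)
          + (-c - s / (2 * (v:ℝ))) := by
    rw [hqcomp_eq]
    beta_reduce
    rw [integral_add iq1 (integrable_const _),
      integral_add (hsumsq_int.const_mul _) (hsum_int.const_mul _),
      integral_const_mul, integral_const_mul, integral_const, hsumsq_eq, hsum_eq]
    simp
  have hF2_meas : Measurable (fun p : ℝ × ℝ => Real.log (f (p.1 + p.2))) :=
    Real.measurable_log.comp (hf_meas.comp hsum_meas)
  have hF2_int_Pi : Integrable (fun p : ℝ × ℝ => Real.log (f (p.1 + p.2))) Pi := by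
    refine Integrable.mono' (hq_int.abs.add (integrable_const |c|))
      hF2_meas.aestronglyMeasurable (ae_of_all _ fun p => ?_)
    show _ ≤ |q (p.1 + p.2)| + |c|
    rw [Real.norm_eq_abs, abs_le]
    have h1 := hq_le (p.1 + p.2)
    have h2 := hf_le_log (p.1 + p.2)
    have h3 := neg_abs_le (q (p.1 + p.2))
    have h4 := neg_le_abs c
    have h5 := abs_nonneg c
    have h6 := abs_nonneg (q (p.1 + p.2))
    constructor
    · linarith
    · linarith
  have hF2_lb : ∫ p, q (p.1 + p.2) ∂Pi ≤ ∫ p, Real.log (f (p.1 + p.2)) ∂Pi :=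
    integral_mono hq_int hF2_int_Pi (fun p => hq_le _)
  -- assembling
  have hintegrand_meas : Measurable (fun p : ℝ × ℝ =>
      Real.log (g (p.2 - p.1)) - Real.log (f p.2)) :=
    (Real.measurable_log.comp (hg_meas.comp (measurable_snd.sub measurable_fst))).sub
      (Real.measurable_log.comp (hf_meas.comp measurable_snd))
  have hkl1 : klDivReal P Q = ∫ p, (Real.log (g (p.2 - p.1)) - Real.log (f p.2)) ∂P := by
    rw [klDivReal]
    exact integral_congr_ae hllr
  have hkl2 : klDivReal P Q
      = ∫ p, (Real.log (g p.2) - Real.log (f (p.1 + p.2))) ∂Pi := by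
    rw [hkl1, hP', integral_map hT.aemeasurable
      (by rw [← hP']; exact hintegrand_meas.aestronglyMeasurable)]
    refine integral_congr_ae (ae_of_all _ fun p => ?_)
    simp only [hT']
    rw [add_sub_cancel_left]
  have hkl3 : klDivReal P Q
      = (∫ p, Real.log (g p.2) ∂Pi) - ∫ p, Real.log (f (p.1 + p.2)) ∂Pi := by
    rw [hkl2, integral_sub hF1_int_Pi hF2_int_Pi]
  have hfinal : klDivReal P Q ≤ (∫ p, Real.log (g p.2) ∂Pi) - ∫ p, q (p.1 + p.2) ∂Pi := by
    rw [hkl3]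
    linarith [hF2_lb]
  rw [hF1_eq_Pi, hA, hq_integral] at hfinal
  refine le_trans hfinal (le_of_eq ?_)
  field_simp
  ring

end WithMeasure

end Auxiliary

theorem mutualInfo_add_gaussian_noise_le
    {Ω : Type*} [MeasurableSpace Ω] (μ : Measure Ω) [IsProbabilityMeasure μ]
    (X W : Ω → ℝ) (vW : ℝ≥0) (hvW : vW ≠ 0)
    (hX : Measurable X) (hW : Measurable W)
    (hX2 : MemLp X 2 μ)
    (hWlaw : μ.map W = gaussianReal 0 vW)
    (hindep : IndepFun X W μ) :
    mutualInfo μ X (fun ω => X ω + W ω) ≤ variance X μ / (vW : ℝ) := by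
  set ν : Measure ℝ := μ.map X with hν
  haveI : IsProbabilityMeasure ν := Measure.isProbabilityMeasure_map hX.aemeasurable
  have hjoint : μ.map (fun ω => (X ω, W ω)) = ν.prod (gaussianReal 0 vW) := by
    rw [hν, ← hWlaw]
    exact (indepFun_iff_map_prod_eq_prod_map_map hX.aemeasurable hW.aemeasurable).mp hindep
  have hXW : Measurable (fun ω => (X ω, W ω)) := hX.prodMk hW
  have hT : Measurable (fun p : ℝ × ℝ => (p.1, p.1 + p.2)) :=
    measurable_fst.prodMk (measurable_fst.add measurable_snd)
  have hsum : Measurable (fun p : ℝ × ℝ => p.1 + p.2) := measurable_fst.add measurable_snd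
  have hP : μ.map (fun ω => (X ω, X ω + W ω))
      = (ν.prod (gaussianReal 0 vW)).map (fun p => (p.1, p.1 + p.2)) := by
    rw [← hjoint, Measure.map_map hT hXW]
    rfl
  have hY : μ.map (fun ω => X ω + W ω)
      = (ν.prod (gaussianReal 0 vW)).map (fun p => p.1 + p.2) := by
    rw [← hjoint, Measure.map_map hsum hXW]
    rfl
  have hmν : Integrable (fun x : ℝ => x) ν :=
    (integrable_map_measure measurable_id.aestronglyMeasurable hX.aemeasurable).mpr
      (hX2.integrable one_le_two)
  have hsν : Integrable (fun x : ℝ => x ^ 2) ν :=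
    (integrable_map_measure (measurable_id.pow_const 2).aestronglyMeasurable
      hX.aemeasurable).mpr hX2.integrable_sq
  have h := aux_bound ν hvW hmν hsν
  have hmi : mutualInfo μ X (fun ω => X ω + W ω)
      = klDivReal ((ν.prod (gaussianReal 0 vW)).map (fun p => (p.1, p.1 + p.2)))
        (ν.prod ((ν.prod (gaussianReal 0 vW)).map (fun p => p.1 + p.2))) := by
    rw [mutualInfo, hP, ← hν, hY]
  rw [hmi]
  refine le_trans h (le_of_eq ?_)
  congr 1
  rw [variance_eq_sub hX2]
  have h1 : ∫ x, x ^ 2 ∂ν = ∫ ω, (X ω) ^ 2 ∂μ := by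
    rw [hν, integral_map (f := fun x : ℝ => x ^ 2) hX.aemeasurable (measurable_id.pow_const 2).aestronglyMeasurable]
  have h2 : ∫ x, x ∂ν = ∫ ω, X ω ∂μ := by
    rw [hν, integral_map (f := fun x : ℝ => x) hX.aemeasurable measurable_id.aestronglyMeasurable]
  rw [h1, h2]
  rfl
end

section
/- Let φ = (φ₁,...,φ_m) be a random vector, T a random variable in {1,...,m}, and φ̃ an independent copy of φ (drawn from the marginal law of φ, independent of both T and φ). Then D(law(φ_T) ‖ law(φ̃_T)) ≤ I(T; φ), where φ_T and φ̃_T denote the T-th coordinate of φ and φ̃ respectively. -/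
open MeasureTheory ProbabilityTheory Real NNReal

open scoped ENNReal

section Aux

variable {α β : Type*} [MeasurableSpace α] [MeasurableSpace β]

/-- Elementary bound: `x * |log x| ≤ c² + 2` for `0 ≤ x ≤ c`. -/
lemma aux_mul_abs_log_le {x c : ℝ} (hx : 0 ≤ x) (hxc : x ≤ c) :
    x * |Real.log x| ≤ c * c + 2 := by
  rcases eq_or_lt_of_le hx with h0 | h0
  · rw [← h0]
    nlinarith
  rcases le_or_gt 1 x with h1 | h1
  · rw [abs_of_nonneg (Real.log_nonneg h1)]
    have hlog : Real.log x ≤ x - 1 := Real.log_le_sub_one_of_pos h0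
    nlinarith
  · rw [abs_of_neg (Real.log_neg h0 h1)]
    have hli : Real.log x⁻¹ ≤ x⁻¹ - 1 := Real.log_le_sub_one_of_pos (by positivity)
    rw [Real.log_inv] at hli
    have hx' : x * -Real.log x ≤ x * (x⁻¹ - 1) :=
      mul_le_mul_of_nonneg_left hli hx
    have hxx : x * (x⁻¹ - 1) = 1 - x := by
      field_simp
    nlinarith

lemma aux_absolutelyContinuous_of_le_smul {P Q : Measure α} {C : ℝ≥0∞} (h : P ≤ C • Q) :
    P ≪ Q := by
  refine Measure.AbsolutelyContinuous.mk fun s hs h0 => ?_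
  have hle : P s ≤ (C • Q) s := h s
  rw [Measure.smul_apply, h0, smul_eq_mul, mul_zero] at hle
  exact le_antisymm hle zero_le

lemma aux_rnDeriv_le_const {P Q : Measure α} [IsFiniteMeasure P] [IsFiniteMeasure Q]
    {C : ℝ≥0∞} (hC0 : C ≠ 0) (hCtop : C ≠ ∞) (h : P ≤ C • Q) :
    ∀ᵐ x ∂Q, P.rnDeriv Q x ≤ C := by
  haveI : IsFiniteMeasure (C • Q) := by
    constructor
    rw [Measure.smul_apply, smul_eq_mul]
    exact ENNReal.mul_lt_top hCtop.lt_top (measure_lt_top Q _)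
  have h1 : P.rnDeriv (C • Q) ≤ᵐ[C • Q] 1 := Measure.rnDeriv_le_one_of_le h
  have h1' : P.rnDeriv (C • Q) ≤ᵐ[Q] 1 :=
    (Measure.absolutelyContinuous_smul hC0).ae_le h1
  have h2 : P.rnDeriv (C • Q) =ᵐ[Q] C⁻¹ • P.rnDeriv Q :=
    Measure.rnDeriv_smul_right_of_ne_top' P Q hC0 hCtop
  filter_upwards [h1', h2] with x hx1 hx2
  rw [hx2] at hx1
  simp only [Pi.smul_apply, smul_eq_mul, Pi.one_apply] at hx1
  calc P.rnDeriv Q x = C * (C⁻¹ * P.rnDeriv Q x) := by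
        rw [← mul_assoc, ENNReal.mul_inv_cancel hC0 hCtop, one_mul]
    _ ≤ C * 1 := mul_le_mul_right hx1 C
    _ = C := mul_one C

lemma aux_integrable_llr {P Q : Measure α} [IsProbabilityMeasure P] [IsProbabilityMeasure Q]
    {C : ℝ≥0∞} (hCtop : C ≠ ∞) (h : P ≤ C • Q) :
    Integrable (llr P Q) P := by
  have hC0 : C ≠ 0 := by
    rintro rfl
    have hle : P Set.univ ≤ ((0 : ℝ≥0∞) • Q) Set.univ := h Set.univ
    simp at hle
  have hac : P ≪ Q := aux_absolutelyContinuous_of_le_smul h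
  have hbound := aux_rnDeriv_le_const hC0 hCtop h
  refine ⟨(measurable_llr P Q).aestronglyMeasurable, ?_⟩
  have hmeas : AEMeasurable (fun a => (‖llr P Q a‖₊ : ℝ≥0∞)) Q :=
    ((measurable_llr P Q).nnnorm.coe_nnreal_ennreal).aemeasurable
  have hrw : ∫⁻ a, (‖llr P Q a‖₊ : ℝ≥0∞) ∂P
      = ∫⁻ a, P.rnDeriv Q a * (‖llr P Q a‖₊ : ℝ≥0∞) ∂Q :=
    (lintegral_rnDeriv_mul hac hmeas).symm
  have hb : ∀ᵐ x ∂Q, P.rnDeriv Q x * (‖llr P Q x‖₊ : ℝ≥0∞)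
      ≤ ENNReal.ofReal (C.toReal * C.toReal + 2) := by
    filter_upwards [hbound, Measure.rnDeriv_lt_top P Q] with x hxle hxlt
    have hr : P.rnDeriv Q x = ENNReal.ofReal (P.rnDeriv Q x).toReal :=
      (ENNReal.ofReal_toReal hxlt.ne).symm
    rw [llr, ← enorm_eq_nnnorm, Real.enorm_eq_ofReal_abs]
    calc P.rnDeriv Q x * ENNReal.ofReal |Real.log (P.rnDeriv Q x).toReal|
        = ENNReal.ofReal ((P.rnDeriv Q x).toReal * |Real.log (P.rnDeriv Q x).toReal|) := by
          rw [ENNReal.ofReal_mul ENNReal.toReal_nonneg, ← hr]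
      _ ≤ ENNReal.ofReal (C.toReal * C.toReal + 2) := by
          refine ENNReal.ofReal_le_ofReal ?_
          exact aux_mul_abs_log_le ENNReal.toReal_nonneg (ENNReal.toReal_mono hCtop hxle)
  rw [HasFiniteIntegral]
  simp only [enorm_eq_nnnorm]
  rw [hrw]
  calc ∫⁻ a, P.rnDeriv Q a * (‖llr P Q a‖₊ : ℝ≥0∞) ∂Q
      ≤ ∫⁻ _, ENNReal.ofReal (C.toReal * C.toReal + 2) ∂Q := lintegral_mono_ae hb
    _ = ENNReal.ofReal (C.toReal * C.toReal + 2) := by simp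
    _ < ∞ := ENNReal.ofReal_lt_top

/-- Data-processing inequality for the real-valued KL divergence, under the assumption
that `P` has density bounded by `C` with respect to `Q`. -/
lemma aux_klDivReal_map_le {P Q : Measure α} [IsProbabilityMeasure P] [IsProbabilityMeasure Q]
    {C : ℝ≥0∞} (hCtop : C ≠ ∞) (h : P ≤ C • Q) {f : α → β} (hf : Measurable f) :
    klDivReal (P.map f) (Q.map f) ≤ klDivReal P Q := by
  haveI hPf : IsProbabilityMeasure (P.map f) := Measure.isProbabilityMeasure_map hf.aemeasurable
  haveI hQf : IsProbabilityMeasure (Q.map f) := Measure.isProbabilityMeasure_map hf.aemeasurable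
  have hmap_le : P.map f ≤ C • Q.map f := by
    refine Measure.le_iff.mpr fun s hs => ?_
    rw [Measure.map_apply hf hs, Measure.smul_apply, Measure.map_apply hf hs, smul_eq_mul]
    have hle : P (f ⁻¹' s) ≤ (C • Q) (f ⁻¹' s) := h (f ⁻¹' s)
    rwa [Measure.smul_apply, smul_eq_mul] at hle
  have hac : P ≪ Q := aux_absolutelyContinuous_of_le_smul h
  have hac' : P.map f ≪ Q.map f := aux_absolutelyContinuous_of_le_smul hmap_le
  have hint : Integrable (llr P Q) P := aux_integrable_llr hCtop h
  have hint' : Integrable (llr (P.map f) (Q.map f)) (P.map f) := aux_integrable_llr hCtop hmap_le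
  set ρ : β → ℝ≥0∞ := (P.map f).rnDeriv (Q.map f) with hρ
  have hρm : Measurable ρ := Measure.measurable_rnDeriv _ _
  set H : α → ℝ := fun x => llr P Q x - llr (P.map f) (Q.map f) (f x) with hH
  have hHm : Measurable H := (measurable_llr P Q).sub ((measurable_llr _ _).comp hf)
  have hintc : Integrable (fun x => llr (P.map f) (Q.map f) (f x)) P :=
    (integrable_map_measure (measurable_llr _ _).aestronglyMeasurable hf.aemeasurable).mp hint'
  have hintH : Integrable H P := hint.sub hintc
  have hI : ∫ x, H x ∂P = klDivReal P Q - klDivReal (P.map f) (Q.map f) := by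
    rw [hH, integral_sub hint hintc]
    unfold klDivReal
    congr 1
    exact (integral_map hf.aemeasurable (measurable_llr _ _).aestronglyMeasurable).symm
  suffices h0 : 0 ≤ ∫ x, H x ∂P by
    rw [hI] at h0
    linarith
  -- a.e. facts with respect to Q
  have hlt : ∀ᵐ x ∂Q, P.rnDeriv Q x < ∞ := Measure.rnDeriv_lt_top P Q
  have hρf_lt : ∀ᵐ x ∂Q, ρ (f x) < ∞ := by
    have h1 : ∀ᵐ y ∂(Q.map f), ρ y < ∞ := Measure.rnDeriv_lt_top _ _
    rw [ae_map_iff hf.aemeasurable (measurableSet_lt hρm measurable_const)] at h1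
    exact h1
  have hzero : ∀ᵐ x ∂Q, ρ (f x) = 0 → P.rnDeriv Q x = 0 := by
    have hAm : MeasurableSet {y | ρ y = 0} := hρm (measurableSet_singleton 0)
    have hPA : P (f ⁻¹' {y | ρ y = 0}) = 0 := by
      rw [← Measure.map_apply hf hAm]
      have hpos := Measure.rnDeriv_pos hac'
      rw [ae_iff] at hpos
      refine measure_mono_null (fun y hy => ?_) hpos
      simp only [Set.mem_setOf_eq] at hy ⊢
      intro hlt'
      exact absurd hy hlt'.ne'
    have h2 : ∫⁻ x in f ⁻¹' {y | ρ y = 0}, P.rnDeriv Q x ∂Q = 0 := by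
      rw [Measure.setLIntegral_rnDeriv hac]
      exact hPA
    have h3 := (setLIntegral_eq_zero_iff (hf hAm) (Measure.measurable_rnDeriv P Q)).mp h2
    filter_upwards [h3] with x hx hx0
    simpa using hx (by simpa using hx0)
  -- the key lintegral bound
  have hmeasE : AEMeasurable (fun x => ENNReal.ofReal (Real.exp (-H x))) Q :=
    (ENNReal.measurable_ofReal.comp (hHm.neg.exp)).aemeasurable
  have hkey : ∫⁻ x, ENNReal.ofReal (Real.exp (-H x)) ∂P ≤ 1 := by
    rw [← lintegral_rnDeriv_mul hac hmeasE]
    have hb : ∀ᵐ x ∂Q, P.rnDeriv Q x * ENNReal.ofReal (Real.exp (-H x)) ≤ ρ (f x) := by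
      filter_upwards [hlt, hρf_lt, hzero] with x hxlt hρlt hz
      rcases eq_or_ne (P.rnDeriv Q x) 0 with hr0 | hr0
      · simp [hr0]
      · have hρ0 : ρ (f x) ≠ 0 := fun h' => hr0 (hz h')
        set r : ℝ := (P.rnDeriv Q x).toReal with hrdef
        set t : ℝ := (ρ (f x)).toReal with htdef
        have hrpos : 0 < r := ENNReal.toReal_pos hr0 hxlt.ne
        have htpos : 0 < t := ENNReal.toReal_pos hρ0 hρlt.ne
        have hexp : Real.exp (-H x) = t / r := by
          rw [hH]
          simp only [neg_sub]
          rw [llr, llr, Real.exp_sub, Real.exp_log htpos, Real.exp_log hrpos]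
        rw [hexp]
        have hrval : P.rnDeriv Q x = ENNReal.ofReal r := (ENNReal.ofReal_toReal hxlt.ne).symm
        rw [hrval, ← ENNReal.ofReal_mul hrpos.le]
        have : r * (t / r) = t := by field_simp
        rw [this, htdef, ENNReal.ofReal_toReal hρlt.ne]
    calc ∫⁻ x, P.rnDeriv Q x * ENNReal.ofReal (Real.exp (-H x)) ∂Q
        ≤ ∫⁻ x, ρ (f x) ∂Q := lintegral_mono_ae hb
      _ = ∫⁻ y, ρ y ∂(Q.map f) := (lintegral_map hρm hf).symm
      _ = (P.map f) Set.univ := Measure.lintegral_rnDeriv hac'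
      _ = 1 := measure_univ
  -- integrability of exp (-H)
  have hexp_int : Integrable (fun x => Real.exp (-H x)) P := by
    refine ⟨(hHm.neg.exp).aestronglyMeasurable, ?_⟩
    rw [HasFiniteIntegral]
    have : ∀ x, (‖Real.exp (-H x)‖ₑ) = ENNReal.ofReal (Real.exp (-H x)) :=
      fun x => Real.enorm_eq_ofReal (Real.exp_pos _).le
    simp only [this]
    exact lt_of_le_of_lt hkey ENNReal.one_lt_top
  -- Jensen's inequality
  have hjen : Real.exp (∫ x, -H x ∂P) ≤ ∫ x, Real.exp (-H x) ∂P := by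
    have := convexOn_exp.map_integral_le (μ := P) (f := fun x => -H x)
      Real.continuous_exp.continuousOn isClosed_univ
      (Filter.Eventually.of_forall fun _ => Set.mem_univ _) hintH.neg ?_
    · exact this
    · exact hexp_int
  have hle1 : ∫ x, Real.exp (-H x) ∂P ≤ 1 := by
    rw [integral_eq_lintegral_of_nonneg_ae (f := fun x => Real.exp (-H x))
      (Filter.Eventually.of_forall fun x => (Real.exp_pos _).le) (hHm.neg.exp).aestronglyMeasurable]
    calc (∫⁻ x, ENNReal.ofReal (Real.exp (-H x)) ∂P).toReal
        ≤ (1 : ℝ≥0∞).toReal := ENNReal.toReal_mono ENNReal.one_ne_top hkey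
      _ = 1 := by simp
  have hneg : ∫ x, -H x ∂P ≤ 0 := by
    have h1 : Real.exp (∫ x, -H x ∂P) ≤ Real.exp 0 := by
      rw [Real.exp_zero]; exact hjen.trans hle1
    exact Real.exp_le_exp.mp h1
  rw [integral_neg] at hneg
  linarith

end Aux

theorem klDiv_selected_le_mutualInfo
    {Ω : Type*} [MeasurableSpace Ω] (μ : Measure Ω) [IsProbabilityMeasure μ]
    {m : ℕ} (T : Ω → Fin m) (φ φt : Ω → Fin m → ℝ)
    (hT : Measurable T) (hφ : Measurable φ) (hφt : Measurable φt)
    (hcopy : μ.map φt = μ.map φ)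
    (hindep : IndepFun (fun ω => (T ω, φ ω)) φt μ) :
    klDivReal (μ.map fun ω => φ ω (T ω)) (μ.map fun ω => φt ω (T ω)) ≤
      mutualInfo μ T φ := by
  classical
  set e : Fin m × (Fin m → ℝ) → ℝ := fun q => q.2 q.1 with he
  have hem : Measurable e := by
    have h1 : Measurable fun q : (Fin m → ℝ) × Fin m => q.1 q.2 :=
      measurable_from_prod_countable_left fun i => measurable_pi_apply i
    exact h1.comp measurable_swap
  set g : Ω → Fin m × (Fin m → ℝ) := fun ω => (T ω, φ ω) with hg
  have hgm : Measurable g := hT.prodMk hφ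
  set P : Measure (Fin m × (Fin m → ℝ)) := μ.map g with hP
  set ν : Measure (Fin m → ℝ) := μ.map φ with hν
  set Q : Measure (Fin m × (Fin m → ℝ)) := (μ.map T).prod ν with hQ
  haveI : IsProbabilityMeasure P := Measure.isProbabilityMeasure_map hgm.aemeasurable
  haveI : IsProbabilityMeasure (μ.map T) := Measure.isProbabilityMeasure_map hT.aemeasurable
  haveI : IsProbabilityMeasure ν := Measure.isProbabilityMeasure_map hφ.aemeasurable
  haveI : IsProbabilityMeasure Q := by rw [hQ]; infer_instance
  -- identify the two measures on the left as pushforwards of P and Q under e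
  have hL1 : (μ.map fun ω => φ ω (T ω)) = P.map e := by
    rw [hP, Measure.map_map hem hgm]
    rfl
  have hTφt : IndepFun T φt μ := by
    have h := hindep.comp
      (measurable_fst : Measurable (Prod.fst : Fin m × (Fin m → ℝ) → Fin m))
      (measurable_id : Measurable (id : (Fin m → ℝ) → (Fin m → ℝ)))
    exact h
  have hL2 : (μ.map fun ω => φt ω (T ω)) = Q.map e := by
    have h1 : μ.map (fun ω => (T ω, φt ω)) = (μ.map T).prod (μ.map φt) :=
      (indepFun_iff_map_prod_eq_prod_map_map hT.aemeasurable hφt.aemeasurable).mp hTφt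
    have h2 : (μ.map fun ω => φt ω (T ω)) = (μ.map (fun ω => (T ω, φt ω))).map e := by
      rw [Measure.map_map hem (hT.prodMk hφt)]
      rfl
    rw [h2, h1, hcopy, ← hQ]
  -- the joint law is dominated by a constant multiple of the product of marginals
  set p : Fin m → ℝ≥0∞ := fun i => (μ.map T) {i} with hp
  have hp_ne_top : ∀ i, p i ≠ ∞ := fun i => measure_ne_top _ _
  set C : ℝ≥0∞ := ∑ i : Fin m, (if p i = 0 then 0 else (p i)⁻¹) with hC
  have hCtop : C ≠ ∞ := by
    rw [hC]
    refine (ENNReal.sum_lt_top.mpr fun i _ => ?_).ne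
    split_ifs with hpi
    · exact ENNReal.zero_lt_top
    · exact ENNReal.inv_lt_top.mpr (pos_iff_ne_zero.mpr hpi)
  -- decomposition of P as a sum over the values of T
  have hunion : (⋃ i : Fin m, T ⁻¹' {i}) = Set.univ := by
    ext ω; simp
  have hdisj : Pairwise (Function.onFun Disjoint fun i : Fin m => T ⁻¹' {i}) := by
    intro i j hij
    refine Set.disjoint_left.mpr fun ω h1 h2 => ?_
    simp only [Set.mem_preimage, Set.mem_singleton_iff] at h1 h2
    exact hij (h1.symm.trans h2)
  have hμsum : μ = Measure.sum (fun i : Fin m => μ.restrict (T ⁻¹' {i})) := by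
    conv_lhs => rw [← Measure.restrict_univ (μ := μ), ← hunion]
    exact Measure.restrict_iUnion hdisj (fun i => hT (measurableSet_singleton i))
  have hPsum : P = Measure.sum
      (fun i : Fin m => ((μ.restrict (T ⁻¹' {i})).map φ).map (Prod.mk i)) := by
    rw [hP]
    conv_lhs => rw [hμsum]
    rw [Measure.map_sum (hgm.aemeasurable.mono_measure (le_of_eq hμsum.symm))]
    congr 1
    funext i
    rw [Measure.map_map measurable_prodMk_left hφ]
    apply Measure.map_congr
    filter_upwards [ae_restrict_mem (hT (measurableSet_singleton i))] with ω hω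
    simp only [Set.mem_preimage, Set.mem_singleton_iff] at hω
    simp [hg, hω, Function.comp]
  have hPQ : P ≤ C • Q := by
    refine Measure.le_iff.mpr fun s hs => ?_
    have hQs : Q s = ∑' i : Fin m, ν (Prod.mk i ⁻¹' s) * p i := by
      rw [hQ, Measure.prod_apply hs]
      exact lintegral_countable' _
    have hPs : P s = ∑' i : Fin m,
        ((μ.restrict (T ⁻¹' {i})).map φ) (Prod.mk i ⁻¹' s) := by
      rw [hPsum, Measure.sum_apply _ hs]
      congr 1
      funext i
      rw [Measure.map_apply measurable_prodMk_left hs]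
    rw [Measure.smul_apply, smul_eq_mul, hPs, hQs, ← ENNReal.tsum_mul_left]
    refine ENNReal.tsum_le_tsum fun i => ?_
    have hmass : ((μ.restrict (T ⁻¹' {i})).map φ) Set.univ = p i := by
      rw [Measure.map_apply hφ MeasurableSet.univ, Set.preimage_univ,
        Measure.restrict_apply_univ]
      exact (Measure.map_apply hT (measurableSet_singleton i)).symm
    rcases eq_or_ne (p i) 0 with hpi | hpi
    · have hz : ((μ.restrict (T ⁻¹' {i})).map φ) (Prod.mk i ⁻¹' s) = 0 :=
        measure_mono_null (Set.subset_univ _) (hmass.trans hpi)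
      simp [hz]
    · have hterm : (p i)⁻¹ ≤ C := by
        rw [hC]
        have := Finset.single_le_sum
          (f := fun j : Fin m => (if p j = 0 then 0 else (p j)⁻¹))
          (fun j _ => zero_le) (Finset.mem_univ i)
        simpa [hpi] using this
      have h1C : (1 : ℝ≥0∞) ≤ C * p i := by
        calc (1 : ℝ≥0∞) = (p i)⁻¹ * p i := (ENNReal.inv_mul_cancel hpi (hp_ne_top i)).symm
          _ ≤ C * p i := mul_le_mul_left hterm _
      have hmono : ((μ.restrict (T ⁻¹' {i})).map φ) (Prod.mk i ⁻¹' s)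
          ≤ ν (Prod.mk i ⁻¹' s) := by
        have hle : (μ.restrict (T ⁻¹' {i})).map φ ≤ ν :=
          hν ▸ Measure.map_mono Measure.restrict_le_self hφ
        exact hle _
      calc ((μ.restrict (T ⁻¹' {i})).map φ) (Prod.mk i ⁻¹' s)
          ≤ ν (Prod.mk i ⁻¹' s) := hmono
        _ = 1 * ν (Prod.mk i ⁻¹' s) := (one_mul _).symm
        _ ≤ (C * p i) * ν (Prod.mk i ⁻¹' s) := mul_le_mul_left h1C _
        _ = C * (ν (Prod.mk i ⁻¹' s) * p i) := by ring
  calc klDivReal (μ.map fun ω => φ ω (T ω)) (μ.map fun ω => φt ω (T ω))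
      = klDivReal (P.map e) (Q.map e) := by rw [hL1, hL2]
    _ ≤ klDivReal P Q := aux_klDivReal_map_le hCtop hPQ hem
    _ = mutualInfo μ T φ := rfl
end

section
/- Let φ₁,...,φ_m be random variables each uniformly distributed on [0,1] (not necessarily independent), let ε ∈ (0, 1/2), define Z_{ε,i} = 1{φᵢ < ε} and Z_ε = (Z_{ε,1},...,Z_{ε,m}), and let T be a random variable in {1,...,m}. Then P(φ_T < ε) ≤ ε + √(I(T; Z_ε)/log(1/(2ε))). -/
open MeasureTheory ProbabilityTheory Real NNReal

section Helpers
open MeasureTheory ProbabilityTheory Real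


lemma klReal_nonneg {α : Type*} [MeasurableSpace α] {P Q : Measure α}
    [IsProbabilityMeasure P] [IsProbabilityMeasure Q] (hPQ : P ≪ Q)
    (hint : Integrable (llr P Q) P) (hint2 : Integrable (fun x => (Q.rnDeriv P x).toReal) P) :
    0 ≤ ∫ x, llr P Q x ∂P := by
  have hqp : Integrable (llr Q P) P := hint.neg.congr (neg_llr hPQ)
  have h1 : ∫ x, llr P Q x ∂P = - ∫ x, llr Q P x ∂P := by
    rw [← integral_neg]
    refine integral_congr_ae ?_
    filter_upwards [neg_llr hPQ] with x hx
    simp only [Pi.neg_apply] at hx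
    simp [← hx]
  rw [h1, neg_nonneg]
  have h2 : ∫ x, llr Q P x ∂P ≤ ∫ x, ((Q.rnDeriv P x).toReal - 1) ∂P := by
    refine integral_mono_ae hqp (hint2.sub (integrable_const 1)) ?_
    filter_upwards [Measure.rnDeriv_pos' hPQ, Measure.rnDeriv_lt_top Q P] with x hpos hlt
    exact Real.log_le_sub_one_of_pos (ENNReal.toReal_pos hpos.ne' hlt.ne)
  refine h2.trans ?_
  rw [integral_sub hint2 (integrable_const 1)]
  simp only [integral_const, measure_univ, ENNReal.toReal_one, smul_eq_mul, one_mul, probReal_univ]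
  have h3 : ∫ x, (Q.rnDeriv P x).toReal ∂P ≤ (Q Set.univ).toReal := by
    have := Measure.setIntegral_toReal_rnDeriv_le (μ := Q) (ν := P) (s := Set.univ) (by simp)
    simpa using this
  simp only [measure_univ, ENNReal.toReal_one] at h3
  linarith


lemma donsker_varadhan {α : Type*} [Fintype α] [MeasurableSpace α] [MeasurableSingletonClass α]
    {P Q : Measure α} [IsProbabilityMeasure P] [IsProbabilityMeasure Q] (hPQ : P ≪ Q)
    (f : α → ℝ) :
    ∫ x, f x ∂P ≤ ∫ x, llr P Q x ∂P + Real.log (∫ x, Real.exp (f x) ∂Q) := by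
  have hfQ : Integrable (fun x => Real.exp (f x)) Q := .of_finite
  have hQt : IsProbabilityMeasure (Q.tilted f) := isProbabilityMeasure_tilted hfQ
  have hPt : P ≪ Q.tilted f := hPQ.trans (absolutelyContinuous_tilted hfQ)
  have h0 : (0:ℝ) ≤ ∫ x, llr P (Q.tilted f) x ∂P :=
    klReal_nonneg hPt .of_finite .of_finite
  have heq := integral_llr_tilted_right hPQ (f := f) .of_finite hfQ .of_finite
  linarith [heq ▸ h0]


-- (A) for x ≤ 0
lemma rA {x : ℝ} (hx : x ≤ 0) : exp x - 1 - x ≤ x^2/2 := by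
  have h : MonotoneOn (fun x : ℝ => exp x - 1 - x - x^2/2) (Set.Iic 0) := by
    have hd : ∀ y : ℝ, HasDerivAt (fun x : ℝ => exp x - 1 - x - x^2/2) (exp y - 1 - y) y := by
      intro y
      have := ((((Real.hasDerivAt_exp y).sub_const 1).sub (hasDerivAt_id y)).sub
        (((hasDerivAt_pow 2 y)).div_const 2))
      exact this.congr_deriv (by ring)
    refine monotoneOn_of_deriv_nonneg (convex_Iic 0) (Continuous.continuousOn (by continuity))
      (fun y hy => (hd y).differentiableAt.differentiableWithinAt) ?_
    intro y hy
    rw [(hd y).deriv]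
    rw [interior_Iic] at hy
    nlinarith [add_one_le_exp y]
  have := h (Set.mem_Iic.2 hx) (Set.mem_Iic.2 le_rfl) hx
  norm_num at this
  linarith

-- (B) for x ≥ 0
lemma rB {x : ℝ} (hx : 0 ≤ x) : exp x - 1 - x ≤ x^2 * exp x / 2 := by
  have h : MonotoneOn (fun x : ℝ => x^2 * exp x / 2 - (exp x - 1 - x)) (Set.Ici 0) := by
    have hd : ∀ y : ℝ, HasDerivAt (fun x : ℝ => x^2 * exp x / 2 - (exp x - 1 - x))
        ((2*y*exp y + y^2 * exp y)/2 - (exp y - 1)) y := by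
      intro y
      have h1 : HasDerivAt (fun x : ℝ => x^2 * exp x) (2*y*exp y + y^2*exp y) y := by
        have := ((hasDerivAt_pow 2 y)).mul (Real.hasDerivAt_exp y)
        exact this.congr_deriv (by ring)
      have := (h1.div_const 2).sub (((Real.hasDerivAt_exp y).sub_const 1).sub (hasDerivAt_id y))
      exact this.congr_deriv (by ring)
    refine monotoneOn_of_deriv_nonneg (convex_Ici 0) (Continuous.continuousOn (by continuity))
      (fun y hy => (hd y).differentiableAt.differentiableWithinAt) ?_
    intro y hy
    rw [(hd y).deriv]
    rw [interior_Ici] at hy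
    -- need (2y+y²)e^y/2 - e^y + 1 ≥ 0 ⟺ e^y(1 - y - y²/2) ≤ 1; use e^{-y} ≥ 1-y
    have h2 : 1 - y ≤ exp (-y) := by linarith [add_one_le_exp (-y)]
    have h3 : exp y * exp (-y) = 1 := by rw [← exp_add]; simp
    nlinarith [exp_pos y, (Set.mem_Ioi.1 hy).le, exp_pos (-y)]
  have := h (Set.mem_Ici.2 le_rfl) (Set.mem_Ici.2 hx) hx
  norm_num at this
  linarith

-- (C) Padé: for x ≥ 0
lemma rC {x : ℝ} (hx : 0 ≤ x) : exp x - 1 - x ≤ x * (exp x - 1) / 2 := by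
  have key : (2 - x) * exp x ≤ 2 + x := by
    rcases le_or_gt 2 x with h | h
    · nlinarith [exp_pos x]
    · have h : MonotoneOn (fun x : ℝ => 2 + x - (2 - x) * exp x) (Set.Ici 0) := by
        have hd : ∀ y : ℝ, HasDerivAt (fun x : ℝ => 2 + x - (2 - x) * exp x)
            (1 - (1 - y) * exp y) y := by
          intro y
          have h1 : HasDerivAt (fun x : ℝ => (2 - x) * exp x) ((-1) * exp y + (2 - y) * exp y) y :=
            (((hasDerivAt_id y).const_sub 2)).mul (Real.hasDerivAt_exp y)
          have := ((hasDerivAt_id y).const_add 2).sub h1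
          exact this.congr_deriv (by ring)
        refine monotoneOn_of_deriv_nonneg (convex_Ici 0) (Continuous.continuousOn (by continuity))
          (fun y hy => (hd y).differentiableAt.differentiableWithinAt) ?_
        intro y hy
        rw [(hd y).deriv]
        have h2 : 1 - y ≤ exp (-y) := by linarith [add_one_le_exp (-y)]
        have h3 : exp y * exp (-y) = 1 := by rw [← exp_add]; simp
        nlinarith [exp_pos y, exp_pos (-y)]
      have := h (Set.mem_Ici.2 le_rfl) (Set.mem_Ici.2 hx) hx
      simp only [exp_zero] at this
      linarith
  nlinarith [key]


lemma hoeffding_two_point {ε : ℝ} (h0 : 0 < ε) (h1 : ε < 1) {l : ℝ} (hl : 0 ≤ l) :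
    1 - ε + ε * exp l ≤ exp (l * ε + l^2 / 8) := by
  set M : ℝ → ℝ := fun y => 1 - ε + ε * exp y with hM
  have Mpos : ∀ y, 0 < M y := fun y => by
    have := exp_pos y; simp only [hM]; nlinarith
  have Mcont : Continuous M := by continuity
  have hdM : ∀ y, HasDerivAt M (ε * exp y) y := fun y => by
    have := ((Real.hasDerivAt_exp y).const_mul ε).const_add (1 - ε)
    simpa [hM] using this
  set G : ℝ → ℝ := fun y => y/4 + ε - ε * exp y / M y with hG
  have hdG : ∀ y, HasDerivAt G (1/4 - (ε * exp y * M y - ε * exp y * (ε * exp y)) / (M y)^2) y := by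
    intro y
    have h1' : HasDerivAt (fun x => ε * exp x / M x)
        ((ε * exp y * M y - ε * exp y * (ε * exp y)) / (M y)^2) y :=
      ((Real.hasDerivAt_exp y).const_mul ε).div (hdM y) (Mpos y).ne'
    have := (((hasDerivAt_id y).div_const 4).add_const ε).sub h1'
    exact this.congr_deriv (by ring)
  have hGcont : Continuous G := by
    apply Continuous.sub (by continuity)
    exact (continuous_const.mul continuous_exp).div Mcont (fun y => (Mpos y).ne')
  have hG0 : G 0 = 0 := by simp [hG, hM]
  have hGnonneg : ∀ y, 0 ≤ y → 0 ≤ G y := by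
    intro y hy
    have hmono : MonotoneOn G (Set.Ici 0) := by
      refine monotoneOn_of_deriv_nonneg (convex_Ici 0) hGcont.continuousOn
        (fun z hz => (hdG z).differentiableAt.differentiableWithinAt) ?_
      intro z hz
      rw [(hdG z).deriv, sub_nonneg]
      rw [div_le_iff₀ (pow_pos (Mpos z) 2)]
      nlinarith [sq_nonneg (1 - ε - ε * rexp z), sq_nonneg (M z - 2 * ε * rexp z)]
    calc (0:ℝ) = G 0 := hG0.symm
    _ ≤ G y := hmono (Set.mem_Ici.2 le_rfl) (Set.mem_Ici.2 hy) hy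
  -- F = l^2/8 + l ε − log (M l)
  set F : ℝ → ℝ := fun y => y^2/8 + y*ε - log (M y) with hF
  have hdF : ∀ y, HasDerivAt F (G y) y := by
    intro y
    have hlog : HasDerivAt (fun x => log (M x)) (ε * exp y / M y) y :=
      (hdM y).log (Mpos y).ne'
    have := (((hasDerivAt_pow 2 y).div_const 8).add ((hasDerivAt_id y).mul_const ε)).sub hlog
    exact this.congr_deriv (by simp only [hG]; push_cast; ring)
  have hFcont : Continuous F := by
    apply Continuous.sub (by continuity)
    exact Mcont.log (fun y => (Mpos y).ne')
  have hF0 : F 0 = 0 := by simp [hF, hM]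
  have hFl : 0 ≤ F l := by
    have hmono : MonotoneOn F (Set.Ici 0) := by
      refine monotoneOn_of_deriv_nonneg (convex_Ici 0) hFcont.continuousOn
        (fun z hz => (hdF z).differentiableAt.differentiableWithinAt) ?_
      intro z hz
      rw [(hdF z).deriv]
      rw [interior_Ici] at hz
      exact hGnonneg z hz.le
    calc (0:ℝ) = F 0 := hF0.symm
    _ ≤ F l := hmono (Set.mem_Ici.2 le_rfl) (Set.mem_Ici.2 hl) hl
  have : log (M l) ≤ l * ε + l^2/8 := by simp only [hF] at hFl; linarith
  calc M l = exp (log (M l)) := (exp_log (Mpos l)).symm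
  _ ≤ exp (l * ε + l^2/8) := exp_le_exp.2 this

set_option maxHeartbeats 2000000 in
lemma bernoulli_mgf {ε : ℝ} (h0 : 0 < ε) (h2 : ε < 1/2) (l : ℝ) :
    1 - ε + ε * exp l ≤ exp (l * ε + l^2 / (4 * log (1/(2*ε)))) := by
  set L := log (1/(2*ε)) with hLdef
  have h2ε : 0 < 2*ε := by linarith
  have hL : 0 < L := log_pos (by rw [lt_div_iff₀ h2ε]; linarith)
  have hLne : L ≠ 0 := hL.ne'
  have hεL : exp (-L) = 2*ε := by
    rw [hLdef, one_div, log_inv, neg_neg, exp_log h2ε]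
  have hεeq : ε = exp (-L) / 2 := by rw [hεL]; ring
  have hexp : ∀ x : ℝ, ε * exp x = exp (x - L) / 2 := by
    intro x
    rw [hεeq, div_mul_eq_mul_div, ← exp_add]
    have : -L + x = x - L := by ring
    rw [this]
  have hLexp : L + 1 ≤ exp L := add_one_le_exp L
  clear_value L
  have key : ∀ x : ℝ, ε * (exp x - 1 - x) ≤ x^2/(4*L) →
      1 - ε + ε * exp x ≤ exp (x * ε + x^2 / (4*L)) := by
    intro x hx
    have h3 : 1 - ε + ε * exp x = 1 + ε * (exp x - 1) := by ring
    have h4 : 1 + ε * (exp x - 1) ≤ exp (ε * (exp x - 1)) := by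
      linarith [add_one_le_exp (ε * (exp x - 1))]
    rw [h3]
    refine h4.trans (exp_le_exp.2 ?_)
    nlinarith [hx]
  rcases le_or_gt l 0 with hl | hl
  · -- l ≤ 0
    refine key l ?_
    rw [le_div_iff₀ (by linarith : (0:ℝ) < 4*L)]
    have h6 : 2*ε*L ≤ 1 := by
      rw [← hεL]
      have hinv : exp (-L) * exp L = 1 := by rw [← exp_add]; simp
      nlinarith [mul_nonneg (exp_pos (-L)).le (by linarith : (0:ℝ) ≤ exp L - L)]
    have hA : ε * (exp l - 1 - l) ≤ ε * (l^2/2) :=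
      mul_le_mul_of_nonneg_left (rA hl) h0.le
    have hB : ε * (exp l - 1 - l) * (4*L) ≤ ε * (l^2/2) * (4*L) :=
      mul_le_mul_of_nonneg_right hA (by linarith)
    have hC : (2*ε*L) * l^2 ≤ 1 * l^2 := mul_le_mul_of_nonneg_right h6 (sq_nonneg l)
    nlinarith [hB, hC]
  · rcases le_or_gt L 2 with hL2 | hL2
    · -- small L: Hoeffding
      refine (hoeffding_two_point h0 (by linarith) hl.le).trans (exp_le_exp.2 ?_)
      have : l^2/8 ≤ l^2/(4*L) := by
        apply div_le_div_of_nonneg_left (sq_nonneg l) (by linarith) (by linarith)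
      linarith
    · rcases le_or_gt l 1 with hl1 | hl1
      · -- 0 ≤ l ≤ 1
        refine key l ?_
        have hkey : exp (l - L) * L ≤ 1 := by
          have h1' : exp (l - L) ≤ exp (1 - L) := exp_le_exp.2 (by linarith)
          have h2' : L ≤ exp (L - 1) := by linarith [add_one_le_exp (L-1)]
          have h3' : exp (1 - L) * exp (L - 1) = 1 := by rw [← exp_add]; norm_num
          nlinarith [exp_pos (1 - L), exp_pos (l - L)]
        have h7 : ε * exp l ≤ 1/(2*L) := by
          rw [hexp l, div_le_div_iff₀ (by norm_num) (by linarith)]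
          nlinarith [hkey]
        calc ε * (exp l - 1 - l) ≤ ε * (l^2 * exp l / 2) :=
              mul_le_mul_of_nonneg_left (rB hl.le) h0.le
        _ = (ε * exp l) * (l^2/2) := by ring
        _ ≤ (1/(2*L)) * (l^2/2) := mul_le_mul_of_nonneg_right h7 (by positivity)
        _ = l^2/(4*L) := by field_simp; ring
      · rcases le_or_gt l L with hlL | hlL
        · -- 1 ≤ l ≤ L
          refine key l ?_
          have hlpos : (0:ℝ) < l := by linarith
          have hchord : exp (l - L) ≤ l / L := by
            have h9 : log (L/l) ≤ L/l - 1 := log_le_sub_one_of_pos (by positivity)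
            have h10 : L/l - 1 ≤ L - l := by
              rw [div_sub_one hlpos.ne', div_le_iff₀ hlpos]
              nlinarith
            have hinv : log (l/L) = - log (L/l) := by
              rw [← log_inv, inv_div]
            have h11 : l - L ≤ log (l/L) := by linarith
            calc exp (l - L) ≤ exp (log (l/L)) := exp_le_exp.2 h11
            _ = l / L := exp_log (by positivity)
          have h12 : ε * exp l ≤ l/(2*L) := by
            rw [hexp l, div_le_div_iff₀ (by norm_num) (by linarith)]
            have hq : l/L*(2*L) = l * 2 := by field_simp
            nlinarith [mul_le_mul_of_nonneg_right hchord (by linarith : (0:ℝ) ≤ 2*L)]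
          calc ε * (exp l - 1 - l) ≤ ε * (l * (exp l - 1) / 2) :=
                mul_le_mul_of_nonneg_left (rC hl.le) h0.le
          _ = (ε * (exp l - 1)) * (l/2) := by ring
          _ ≤ (ε * exp l) * (l/2) := by nlinarith [h0, hlpos]
          _ ≤ (l/(2*L)) * (l/2) := mul_le_mul_of_nonneg_right h12 (by linarith)
          _ = l^2/(4*L) := by field_simp; ring
        · rcases le_or_gt l (L + log 2) with hlm | hlm
          · -- L ≤ l ≤ L + log 2
            have ht0 : (0:ℝ) ≤ l - L := by linarith
            have htl : l - L ≤ log 2 := by linarith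
            have hlog2pos : (0:ℝ) < log 2 := log_pos (by norm_num)
            have hl2lt : log 2 < 0.6931471808 := log_two_lt_d9
            have hl2gt : 0.6931471803 < log 2 := log_two_gt_d9
            set t := l - L with ht
            clear_value t
            have hchord : exp t ≤ 1 + t / log 2 := by
              have hθ1 : (0:ℝ) ≤ t / log 2 := by positivity
              have hθ2 : t / log 2 ≤ 1 := by rw [div_le_one hlog2pos]; exact htl
              have hcx := convexOn_exp.2 (Set.mem_univ (0:ℝ)) (Set.mem_univ (log 2))
                (by linarith : (0:ℝ) ≤ 1 - t/log 2) hθ1 (by ring)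
              simp only [smul_eq_mul, mul_zero, zero_add, exp_zero, mul_one,
                exp_log (by norm_num : (0:ℝ) < 2)] at hcx
              calc exp t = exp (t / log 2 * log 2) := by
                    rw [div_mul_cancel₀ _ hlog2pos.ne']
              _ ≤ (1 - t/log 2) + t/log 2 * 2 := by
                    convert hcx using 2 <;> ring
              _ = 1 + t / log 2 := by ring
            have hLHS : 1 - ε + ε * exp l ≤ 1 + exp t / 2 := by
              rw [hexp l, ← ht]; linarith
            have hlog : log (1 + exp t / 2) ≤ L/4 + t/2 := by
              have hu : (0:ℝ) < (1 + exp t/2)/2 := by positivity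
              have h15 : log ((1 + exp t/2)/2) ≤ (1 + exp t/2)/2 - 1 :=
                log_le_sub_one_of_pos hu
              have h16 : log (1 + exp t/2) = log ((1 + exp t/2)/2) + log 2 := by
                rw [← log_mul (by positivity) (by norm_num)]
                congr 1; ring
              have h18 : t / log 2 ≤ 2 * t := by
                rw [div_le_iff₀ hlog2pos]
                nlinarith [ht0, hl2gt]
              linarith [hchord, h15, h16, ht0]
            have hq : L/4 + t/2 ≤ l^2/(4*L) := by
              rw [le_div_iff₀ (by linarith : (0:ℝ) < 4*L)]
              have hl2 : l^2 = L^2 + 2*L*t + t^2 := by rw [ht]; ring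
              nlinarith [sq_nonneg t]
            calc 1 - ε + ε * exp l ≤ 1 + exp t / 2 := hLHS
            _ = exp (log (1 + exp t / 2)) := (exp_log (by positivity)).symm
            _ ≤ exp (l * ε + l^2/(4*L)) := by
                apply exp_le_exp.2
                have hle : (0:ℝ) ≤ l * ε := mul_nonneg (by linarith) h0.le
                linarith [hlog, hq]
          · -- l ≥ L + log 2
            have h20 : (2:ℝ) ≤ exp (l - L) := by
              calc (2:ℝ) = exp (log 2) := (exp_log (by norm_num)).symm
              _ ≤ exp (l - L) := exp_le_exp.2 (by linarith [log_pos (by norm_num : (1:ℝ) < 2)])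
            have hLHS : 1 - ε + ε * exp l ≤ exp (l - L) := by
              rw [hexp l]; linarith
            refine hLHS.trans (exp_le_exp.2 ?_)
            have h21 : l - L ≤ l^2/(4*L) := by
              rw [le_div_iff₀ (by linarith)]
              nlinarith [sq_nonneg (l - 2*L)]
            have hle : (0:ℝ) ≤ l * ε := mul_nonneg (by linarith) h0.le
            linarith

end Helpers

set_option maxHeartbeats 1000000 in
theorem prob_small_pvalue_le
    {Ω : Type*} [MeasurableSpace Ω] (μ : Measure Ω) [IsProbabilityMeasure μ]
    {m : ℕ} (T : Ω → Fin m) (φ : Ω → Fin m → ℝ) (ε : ℝ)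
    (hε : ε ∈ Set.Ioo (0 : ℝ) (1 / 2))
    (hT : Measurable T) (hφ : Measurable φ)
    (hunif : ∀ i, μ.map (fun ω => φ ω i) = volume.restrict (Set.Icc (0 : ℝ) 1)) :
    (μ {ω | φ ω (T ω) < ε}).toReal ≤
      ε + Real.sqrt
        ((mutualInfo μ T fun ω => fun i => decide (φ ω i < ε)) / Real.log (1 / (2 * ε))) := by
  obtain ⟨hε0, hε2⟩ := hε
  set L := Real.log (1/(2*ε)) with hLdef
  have hL : 0 < L := Real.log_pos (by rw [lt_div_iff₀ (by linarith : (0:ℝ) < 2*ε)]; linarith)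
  set Z : Ω → (Fin m → Bool) := fun ω => fun i => decide (φ ω i < ε) with hZdef
  have hZ : Measurable Z := by
    refine measurable_pi_lambda _ (fun i => ?_)
    have h1 : (fun ω => decide (φ ω i < ε)) =
        (fun x : ℝ => if x < ε then true else false) ∘ (fun ω => φ ω i) := by
      funext ω; by_cases h : φ ω i < ε <;> simp [h]
    rw [h1]
    exact (Measurable.ite measurableSet_Iio measurable_const measurable_const).comp
      ((measurable_pi_apply i).comp hφ)
  have hpair : Measurable fun ω => (T ω, Z ω) := hT.prodMk hZ
  set P : Measure (Fin m × (Fin m → Bool)) := μ.map (fun ω => (T ω, Z ω)) with hPdef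
  set Q : Measure (Fin m × (Fin m → Bool)) := (μ.map T).prod (μ.map Z) with hQdef
  haveI : IsProbabilityMeasure P := Measure.isProbabilityMeasure_map hpair.aemeasurable
  haveI : IsProbabilityMeasure (μ.map T) := Measure.isProbabilityMeasure_map hT.aemeasurable
  haveI : IsProbabilityMeasure (μ.map Z) := Measure.isProbabilityMeasure_map hZ.aemeasurable
  haveI : IsProbabilityMeasure Q := by rw [hQdef]; infer_instance
  have hPQ : P ≪ Q := by
    refine Measure.AbsolutelyContinuous.mk (fun s _ hQs => ?_)
    rw [← Set.biUnion_of_singleton s] at hQs ⊢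
    rw [measure_biUnion_null_iff (Set.to_countable s)] at hQs ⊢
    intro x hx
    specialize hQs x hx
    obtain ⟨t, z⟩ := x
    rw [hQdef, ← Set.singleton_prod_singleton, Measure.prod_prod] at hQs
    rw [hPdef, Measure.map_apply hpair (measurableSet_singleton _)]
    rcases mul_eq_zero.1 hQs with h | h
    · rw [Measure.map_apply hT (measurableSet_singleton t)] at h
      refine measure_mono_null (fun ω hω => ?_) h
      simp only [Set.mem_preimage, Set.mem_singleton_iff, Prod.mk.injEq] at hω ⊢
      exact hω.1
    · rw [Measure.map_apply hZ (measurableSet_singleton z)] at h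
      refine measure_mono_null (fun ω hω => ?_) h
      simp only [Set.mem_preimage, Set.mem_singleton_iff, Prod.mk.injEq] at hω ⊢
      exact hω.2
  set A : Set Ω := {ω | φ ω (T ω) < ε} with hAdef
  have hA : MeasurableSet A := by
    have h1 : A = ⋃ t : Fin m, (T ⁻¹' {t} ∩ {ω | φ ω t < ε}) := by
      ext ω
      simp only [hAdef, Set.mem_setOf_eq, Set.mem_iUnion, Set.mem_inter_iff, Set.mem_preimage,
        Set.mem_singleton_iff]
      constructor
      · intro h; exact ⟨T ω, rfl, h⟩
      · rintro ⟨t, rfl, h⟩; exact h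
    rw [h1]
    exact MeasurableSet.iUnion fun t => (hT (measurableSet_singleton t)).inter
      (((measurable_pi_apply t).comp hφ) measurableSet_Iio)
  have hAi : ∀ i : Fin m, μ {ω | φ ω i < ε} = ENNReal.ofReal ε := by
    intro i
    have h1 : {ω | φ ω i < ε} = (fun ω => φ ω i) ⁻¹' (Set.Iio ε) := rfl
    rw [h1, ← Measure.map_apply (show Measurable fun ω => φ ω i from (measurable_pi_apply i).comp hφ) measurableSet_Iio, hunif i,
      Measure.restrict_apply measurableSet_Iio]
    have h2 : Set.Iio ε ∩ Set.Icc 0 1 = Set.Ico 0 ε := by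
      ext x; simp only [Set.mem_inter_iff, Set.mem_Iio, Set.mem_Icc, Set.mem_Ico]
      constructor
      · rintro ⟨ha, hb, _⟩; exact ⟨hb, ha⟩
      · rintro ⟨ha, hb⟩; exact ⟨hb, ha, by linarith⟩
    rw [h2, Real.volume_Ico, sub_zero]
  set p₀ := (μ A).toReal with hp₀
  set I := ∫ x, llr P Q x ∂P with hIdef
  have hcore : ∀ c : ℝ, c * p₀ ≤ I + (c * ε + c^2/(4 * L)) := by
    intro c
    set f : Fin m × (Fin m → Bool) → ℝ := fun x => c * (if x.2 x.1 then 1 else 0) with hfdef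
    have hfP : ∫ x, f x ∂P = c * p₀ := by
      rw [hPdef, integral_map hpair.aemeasurable (measurable_of_countable f).aestronglyMeasurable]
      have h3 : (fun ω => f (T ω, Z ω)) = fun ω => Set.indicator A (fun _ => c) ω := by
        funext ω
        by_cases h : φ ω (T ω) < ε
        · have hmem : ω ∈ A := h
          simp [hfdef, hZdef, h, Set.indicator_of_mem hmem]
        · have hmem : ω ∉ A := h
          simp [hfdef, hZdef, h, Set.indicator_of_notMem hmem]
      rw [h3, integral_indicator_const c hA, smul_eq_mul, mul_comm]
      rfl
    have hfQ : ∫ x, Real.exp (f x) ∂Q = 1 - ε + ε * Real.exp c := by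
      rw [hQdef, integral_prod _ (Integrable.of_finite)]
      have hinner : ∀ t : Fin m,
          ∫ z, Real.exp (f (t, z)) ∂(μ.map Z) = 1 - ε + ε * Real.exp c := by
        intro t
        rw [integral_map hZ.aemeasurable (measurable_of_countable _).aestronglyMeasurable]
        have h4 : (fun ω => Real.exp (f (t, Z ω))) =
            fun ω => Set.indicator {ω | φ ω t < ε} (fun _ => Real.exp c - 1) ω + 1 := by
          funext ω
          by_cases h : φ ω t < ε
          · have hmem : ω ∈ {ω | φ ω t < ε} := h
            simp [hfdef, hZdef, h, Set.indicator_of_mem hmem]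
          · have hmem : ω ∉ {ω | φ ω t < ε} := h
            simp [hfdef, hZdef, h, Set.indicator_of_notMem hmem]
        have hBt : MeasurableSet {ω | φ ω t < ε} :=
          ((measurable_pi_apply t).comp hφ) measurableSet_Iio
        rw [h4, integral_add ((integrable_const _).indicator hBt) (integrable_const 1),
          integral_indicator_const _ hBt, integral_const, measureReal_def, hAi t, smul_eq_mul, smul_eq_mul]
        simp only [measure_univ, ENNReal.toReal_one, one_mul, probReal_univ]
        rw [ENNReal.toReal_ofReal hε0.le]
        ring
      rw [show (fun t => ∫ z, Real.exp (f (t, z)) ∂(μ.map Z)) =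
          (fun _ : Fin m => 1 - ε + ε * Real.exp c) from funext hinner]
      rw [integral_const]
      simp [measure_univ]
    have hDV := donsker_varadhan hPQ f
    rw [hfP, hfQ] at hDV
    have hpos : (0:ℝ) < 1 - ε + ε * Real.exp c := by nlinarith [Real.exp_pos c]
    have hlog : Real.log (1 - ε + ε * Real.exp c) ≤ c * ε + c^2/(4*L) := by
      rw [Real.log_le_iff_le_exp hpos]
      exact bernoulli_mgf hε0 hε2 c
    linarith
  have hMI : mutualInfo μ T Z = I := rfl
  rw [hMI]
  rcases le_or_gt p₀ ε with h | h
  · exact h.trans (le_add_of_nonneg_right (Real.sqrt_nonneg _))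
  · have hs := hcore (2*L*(p₀ - ε))
    have hsq : (2*L*(p₀ - ε))^2/(4*L) = L*(p₀ - ε)^2 := by
      field_simp
      ring
    rw [hsq] at hs
    have hI : L * (p₀ - ε)^2 ≤ I := by nlinarith [hs]
    have hnn : (0:ℝ) ≤ I / L := by
      apply div_nonneg _ hL.le
      nlinarith [sq_nonneg (p₀ - ε)]
    have hfin : p₀ - ε ≤ Real.sqrt (I/L) := by
      rw [Real.le_sqrt (by linarith) hnn]
      rw [le_div_iff₀ hL]
      nlinarith [hI]
    linarith
end

section
/- Fix training inputs x₁,...,x_n and let labels Y₁,...,Y_n ∈ {−1,1} be independent with P(Yⱼ = 1) arbitrary. For a classifier f let L̂(f) = (1/n)·Σⱼ 1{f(xⱼ) ≠ Yⱼ} be its training error and L(f) = E[L̂(f)] its expected error. Let f̂ be a classifier chosen as any (possibly randomized) function of the data (Y₁,...,Y_n). Then E[L(f̂) − L̂(f̂)] ≤ √(I(f̂(x); Y)/(2n)), where f̂(x) = (f̂(x₁),...,f̂(x_n)) and Y = (Y₁,...,Y_n). -/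
open MeasureTheory ProbabilityTheory Real NNReal

lemma integrable_of_null_compl {α : Type*} [MeasurableSpace α] [MeasurableSingletonClass α]
    (μ : Measure α) [IsFiniteMeasure μ] {S : Set α} (hS : S.Finite) (hc : μ Sᶜ = 0)
    (f : α → ℝ) : Integrable f μ := by
  have hae : f =ᵐ[μ] S.indicator f := by
    have : ∀ᵐ x ∂μ, x ∈ S := by
      rw [ae_iff]
      exact hc
    filter_upwards [this] with x hx
    simp [Set.indicator_of_mem hx]
  refine Integrable.congr ?_ hae.symm
  classical
  have : S.indicator f = fun x => ∑ s ∈ hS.toFinset, Set.indicator {s} f x := by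
    funext x
    by_cases hx : x ∈ S
    · rw [Set.indicator_of_mem hx, Finset.sum_eq_single x]
      · simp
      · intro b _ hb; simp [Set.indicator_of_notMem, Ne.symm hb]
      · intro h; exact absurd (hS.mem_toFinset.mpr hx) h
    · rw [Set.indicator_of_notMem hx, Finset.sum_eq_zero]
      intro b hb
      have : x ∉ ({b} : Set α) := by
        rintro rfl; exact hx (hS.mem_toFinset.mp hb)
      simp [Set.indicator_of_notMem this]
  rw [this]
  refine integrable_finset_sum _ (fun s _ => ?_)
  rw [integrable_indicator_iff (measurableSet_singleton s)]
  exact (integrableOn_singleton_iff (hfx := enorm_ne_top)).mpr (Or.inr (measure_lt_top _ _))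

lemma log_mgf_bernoulli_le (p : ℝ) (hp0 : 0 ≤ p) (hp1 : p ≤ 1) (t : ℝ) :
    Real.log (1 - p + p * Real.exp t) ≤ p * t + t ^ 2 / 8 := by
  set u : ℝ → ℝ := fun t => 1 - p + p * Real.exp t with hu_def
  have hu : ∀ t, 0 < u t := by
    intro t
    rcases hp0.eq_or_lt with h | h
    · simp [hu_def, ← h]
    · have := mul_pos h (Real.exp_pos t)
      simp only [hu_def]; nlinarith
  set q : ℝ → ℝ := fun t => p * Real.exp t / u t with hq_def
  have hq0 : ∀ t, 0 ≤ q t := fun t =>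
    div_nonneg (mul_nonneg hp0 (Real.exp_pos t).le) (hu t).le
  have hq1 : ∀ t, q t ≤ 1 := by
    intro t
    rw [hq_def, div_le_one (hu t)]
    simp only [hu_def]; linarith [mul_nonneg hp0 (Real.exp_pos t).le]
  have hu' : ∀ t, HasDerivAt u (p * Real.exp t) t := fun t =>
    ((Real.hasDerivAt_exp t).const_mul p).const_add (1 - p)
  set φ : ℝ → ℝ := fun t => p * t + t ^ 2 / 8 - Real.log (u t) with hφ_def
  set φ' : ℝ → ℝ := fun t => p + t / 4 - q t with hφ'_def
  have hφ : ∀ t, HasDerivAt φ (φ' t) t := by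
    intro t
    have h1 : HasDerivAt (fun t : ℝ => p * t + t ^ 2 / 8) (p + t / 4) t := by
      have ha := (hasDerivAt_id t).const_mul p
      have hb := (hasDerivAt_pow 2 t).div_const 8
      refine (ha.add hb).congr_deriv ?_
      ring
    have h3 : HasDerivAt (fun t => Real.log (u t)) (q t) t := by
      have := (hu' t).log (hu t).ne'
      simpa [hq_def] using this
    exact h1.sub h3
  have hq' : ∀ t, HasDerivAt q (q t - q t ^ 2) t := by
    intro t
    have h := ((Real.hasDerivAt_exp t).const_mul p).div (hu' t) (hu t).ne'
    have hne : (1 - p + p * Real.exp t) ≠ 0 := (hu t).ne'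
    refine h.congr_deriv ?_
    rw [hq_def]
    simp only [hu_def]
    field_simp
  have hφ'2 : ∀ t, HasDerivAt φ' (1 / 4 - (q t - q t ^ 2)) t := by
    intro t
    have h1 : HasDerivAt (fun t : ℝ => p + t / 4) (1 / 4) t :=
      ((hasDerivAt_id t).div_const 4).const_add p
    exact h1.sub (hq' t)
  have hmono : Monotone φ' :=
    monotone_of_deriv_nonneg (fun t => (hφ'2 t).differentiableAt)
      (fun t => by rw [(hφ'2 t).deriv]; nlinarith [sq_nonneg (q t - 1 / 2)])
  have hq00 : q 0 = p := by simp [hq_def, hu_def]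
  have hφ'0 : φ' 0 = 0 := by simp [hφ'_def, hq00]
  have hφ0 : φ 0 = 0 := by simp [hφ_def, hu_def]
  have hcont : Continuous φ := by
    have : Differentiable ℝ φ := fun t => (hφ t).differentiableAt
    exact this.continuous
  have hφnonneg : ∀ t, 0 ≤ φ t := by
    intro t
    rcases le_total 0 t with ht | ht
    · have hm : MonotoneOn φ (Set.Ici 0) := by
        refine monotoneOn_of_deriv_nonneg (convex_Ici 0) hcont.continuousOn
          (fun x _ => (hφ x).differentiableAt.differentiableWithinAt) (fun x hx => ?_)
        rw [(hφ x).deriv, ← hφ'0]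
        exact hmono (le_of_lt (by simpa using hx))
      have := hm Set.self_mem_Ici (Set.mem_Ici.mpr ht) ht
      rwa [hφ0] at this
    · have hm : AntitoneOn φ (Set.Iic 0) := by
        refine antitoneOn_of_deriv_nonpos (convex_Iic 0) hcont.continuousOn
          (fun x _ => (hφ x).differentiableAt.differentiableWithinAt) (fun x hx => ?_)
        rw [(hφ x).deriv, ← hφ'0]
        exact hmono (le_of_lt (by simpa using hx))
      have := hm (Set.mem_Iic.mpr ht) Set.self_mem_Iic ht
      rwa [hφ0] at this
  have := hφnonneg t
  rw [hφ_def] at this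
  simp only at this
  linarith

lemma bernoulli_mgf_le (p s : ℝ) (hp0 : 0 ≤ p) (hp1 : p ≤ 1) :
    (1 - p) * Real.exp (p * s) + p * Real.exp ((p - 1) * s) ≤ Real.exp (s ^ 2 / 8) := by
  have key := log_mgf_bernoulli_le p hp0 hp1 (-s)
  have hu : 0 < 1 - p + p * Real.exp (-s) := by
    rcases hp0.eq_or_lt with h | h
    · simp [← h]
    · nlinarith [mul_pos h (Real.exp_pos (-s))]
  rw [Real.log_le_iff_le_exp hu] at key
  have hmul := mul_le_mul_of_nonneg_left key (Real.exp_pos (p * s)).le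
  calc (1 - p) * Real.exp (p * s) + p * Real.exp ((p - 1) * s)
      = Real.exp (p * s) * (1 - p + p * Real.exp (-s)) := by
        rw [mul_add, ← mul_assoc, mul_comm (Real.exp (p * s)) p, mul_assoc,
          ← Real.exp_add]
        ring_nf
    _ ≤ Real.exp (p * s) * Real.exp (p * -s + (-s) ^ 2 / 8) := hmul
    _ = Real.exp (s ^ 2 / 8) := by rw [← Real.exp_add]; ring_nf

lemma integral_llr_nonneg {α : Type*} [MeasurableSpace α] {P Q : Measure α}
    [IsProbabilityMeasure P] [IsProbabilityMeasure Q] (hPQ : P ≪ Q)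
    (h_int : Integrable (llr P Q) P) : 0 ≤ ∫ x, llr P Q x ∂P := by
  have hneg : ∫ x, llr Q P x ∂P = - ∫ x, llr P Q x ∂P := by
    rw [← integral_neg]
    exact integral_congr_ae (neg_llr hPQ).symm
  have h_int' : Integrable (llr Q P) P := by
    exact Integrable.congr h_int.neg (neg_llr hPQ)
  -- llr Q P ≤ rnDeriv Q P - 1 a.e. P
  have hpos : ∀ᵐ x ∂P, 0 < (Q.rnDeriv P x).toReal := by
    filter_upwards [Measure.inv_rnDeriv hPQ, Measure.rnDeriv_pos hPQ,
      hPQ.ae_le (Measure.rnDeriv_lt_top P Q)] with x hinv hpos hlt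
    rw [← hinv]
    simp only [Pi.inv_apply]
    rw [ENNReal.toReal_inv]
    have : (P.rnDeriv Q x).toReal ≠ 0 := by
      simp [ENNReal.toReal_eq_zero_iff, hpos.ne', hlt.ne]
    positivity
  have hle : ∀ᵐ x ∂P, llr Q P x ≤ (Q.rnDeriv P x).toReal - 1 := by
    filter_upwards [hpos] with x hx
    exact Real.log_le_sub_one_of_pos hx
  have h_int2 : Integrable (fun x => (Q.rnDeriv P x).toReal - 1) P :=
    Measure.integrable_toReal_rnDeriv.sub (integrable_const 1)
  have hmono := integral_mono_ae h_int' h_int2 hle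
  have hbound : ∫ x, ((Q.rnDeriv P x).toReal - 1) ∂P ≤ 0 := by
    rw [integral_sub Measure.integrable_toReal_rnDeriv (integrable_const 1)]
    simp only [integral_const, measure_univ, ENNReal.toReal_one, one_smul, smul_eq_mul]
    have := Measure.integral_toReal_rnDeriv' (μ := Q) (ν := P)
    rw [this]
    simp only [probReal_univ]
    have : (0:ℝ) ≤ (Q.singularPart P).real Set.univ := ENNReal.toReal_nonneg
    linarith
  linarith [hneg ▸ le_trans hmono hbound]

lemma donsker_varadhan_le {α : Type*} [MeasurableSpace α] {P Q : Measure α}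
    [IsProbabilityMeasure P] [IsProbabilityMeasure Q] (hPQ : P ≪ Q) (f : α → ℝ)
    (hfP : Integrable f P) (hefQ : Integrable (fun x => Real.exp (f x)) Q)
    (h1 : Integrable (llr P Q) P) (h2 : Integrable (llr P (Q.tilted f)) P) :
    ∫ x, f x ∂P ≤ ∫ x, llr P Q x ∂P + Real.log (∫ x, Real.exp (f x) ∂Q) := by
  haveI : IsProbabilityMeasure (Q.tilted f) := isProbabilityMeasure_tilted hefQ
  have hPQ' : P ≪ Q.tilted f := hPQ.trans (absolutelyContinuous_tilted hefQ)
  have h0 : 0 ≤ ∫ x, llr P (Q.tilted f) x ∂P := integral_llr_nonneg hPQ' h2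
  rw [integral_llr_tilted_right hPQ hfP hefQ h1] at h0
  linarith

theorem generalization_gap_le_mutualInfo
    {Ω : Type*} [MeasurableSpace Ω] (μ : Measure Ω) [IsProbabilityMeasure μ]
    {n : ℕ} (hn : 0 < n)
    (Y : Ω → Fin n → ℤ) (F : Ω → Fin n → ℤ)
    (hY : Measurable Y) (hF : Measurable F)
    (hYval : ∀ ω j, Y ω j = 1 ∨ Y ω j = -1)
    (hFval : ∀ ω j, F ω j = 1 ∨ F ω j = -1)
    (hindep : iIndepFun
      (fun j ω => Y ω j) μ)
    -- expected error of a fixed prediction vector `v`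
    (L : (Fin n → ℤ) → ℝ)
    (hL : ∀ v, L v = (1 / (n : ℝ)) * ∑ j, (μ {ω | Y ω j ≠ v j}).toReal) :
    ∫ ω, (L (F ω) -
        (1 / (n : ℝ)) * ∑ j, (if F ω j ≠ Y ω j then (1 : ℝ) else 0)) ∂μ ≤
      Real.sqrt (mutualInfo μ F Y / (2 * n)) := by
  classical
  have hn' : (0 : ℝ) < n := Nat.cast_pos.mpr hn
  have hmeas2 : ∀ s : Set ((Fin n → ℤ) × (Fin n → ℤ)), MeasurableSet s :=
    fun s => (Set.to_countable s).measurableSet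
  have hmeas1 : ∀ s : Set (Fin n → ℤ), MeasurableSet s :=
    fun s => (Set.to_countable s).measurableSet
  have hFY : Measurable (fun ω => (F ω, Y ω)) := hF.prodMk hY
  set P : Measure ((Fin n → ℤ) × (Fin n → ℤ)) := μ.map (fun ω => (F ω, Y ω)) with hP_def
  set Q : Measure ((Fin n → ℤ) × (Fin n → ℤ)) := (μ.map F).prod (μ.map Y) with hQ_def
  haveI : IsProbabilityMeasure (μ.map F) := Measure.isProbabilityMeasure_map hF.aemeasurable
  haveI : IsProbabilityMeasure (μ.map Y) := Measure.isProbabilityMeasure_map hY.aemeasurable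
  haveI : IsProbabilityMeasure P := Measure.isProbabilityMeasure_map hFY.aemeasurable
  haveI : IsProbabilityMeasure Q := by rw [hQ_def]; infer_instance
  set S : Set (Fin n → ℤ) := {v | ∀ j, v j = 1 ∨ v j = -1} with hS_def
  have hSfin : S.Finite :=
    (Set.Finite.pi (fun _ : Fin n => Set.toFinite ({1, -1} : Set ℤ))).subset
      (fun v hv j _ => by rcases hv j with h | h <;> simp [h])
  -- support facts
  have hPS : P (S ×ˢ S)ᶜ = 0 := by
    rw [hP_def, Measure.map_apply hFY (hmeas2 _)]
    have : (fun ω => (F ω, Y ω)) ⁻¹' (S ×ˢ S)ᶜ = ∅ := by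
      ext ω
      simp only [Set.mem_preimage, Set.mem_compl_iff, Set.mem_prod, Set.mem_empty_iff_false,
        iff_false, not_not]
      exact ⟨fun j => hFval ω j, fun j => hYval ω j⟩
    rw [this, measure_empty]
  have hF0 : (μ.map F) Sᶜ = 0 := by
    rw [Measure.map_apply hF (hmeas1 _)]
    have : F ⁻¹' Sᶜ = ∅ := by
      ext ω
      simp only [Set.mem_preimage, Set.mem_compl_iff, Set.mem_empty_iff_false, iff_false, not_not]
      exact fun j => hFval ω j
    rw [this, measure_empty]
  have hY0 : (μ.map Y) Sᶜ = 0 := by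
    rw [Measure.map_apply hY (hmeas1 _)]
    have : Y ⁻¹' Sᶜ = ∅ := by
      ext ω
      simp only [Set.mem_preimage, Set.mem_compl_iff, Set.mem_empty_iff_false, iff_false, not_not]
      exact fun j => hYval ω j
    rw [this, measure_empty]
  have hQS : Q (S ×ˢ S)ᶜ = 0 := by
    have hsub : (S ×ˢ S)ᶜ ⊆ (Sᶜ ×ˢ (Set.univ : Set (Fin n → ℤ))) ∪ (Set.univ ×ˢ Sᶜ) := by
      intro a ha
      by_cases h1 : a.1 ∈ S
      · right; exact ⟨Set.mem_univ _, fun h2 => ha ⟨h1, h2⟩⟩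
      · left; exact ⟨h1, Set.mem_univ _⟩
    refine measure_mono_null hsub (measure_union_null ?_ ?_)
    · rw [hQ_def, Measure.prod_prod, hF0, zero_mul]
    · rw [hQ_def, Measure.prod_prod, hY0, mul_zero]
  have hIntP : ∀ f : (Fin n → ℤ) × (Fin n → ℤ) → ℝ, Integrable f P :=
    fun f => integrable_of_null_compl P (hSfin.prod hSfin) hPS f
  have hIntQ : ∀ f : (Fin n → ℤ) × (Fin n → ℤ) → ℝ, Integrable f Q :=
    fun f => integrable_of_null_compl Q (hSfin.prod hSfin) hQS f
  -- absolute continuity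
  have hAC : P ≪ Q := by
    intro s hs
    have hsing : ∀ a ∈ s, P {a} = 0 := by
      intro a ha
      have hQa : Q {a} = 0 :=
        le_antisymm (hs ▸ measure_mono (Set.singleton_subset_iff.mpr ha)) zero_le
      have hprod : Q {a} = (μ.map F) {a.1} * (μ.map Y) {a.2} := by
        rw [hQ_def, ← Set.singleton_prod_singleton, Measure.prod_prod]
      rw [hprod] at hQa
      have hPF : P {a} ≤ (μ.map F) {a.1} := by
        rw [hP_def, Measure.map_apply hFY (hmeas2 _), Measure.map_apply hF (hmeas1 _)]
        refine measure_mono (fun ω hω => ?_)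
        have : (F ω, Y ω) = a := hω
        simp [← this]
      have hPY : P {a} ≤ (μ.map Y) {a.2} := by
        rw [hP_def, Measure.map_apply hFY (hmeas2 _), Measure.map_apply hY (hmeas1 _)]
        refine measure_mono (fun ω hω => ?_)
        have : (F ω, Y ω) = a := hω
        simp [← this]
      rcases mul_eq_zero.mp hQa with h | h
      · exact le_antisymm (h ▸ hPF) zero_le
      · exact le_antisymm (h ▸ hPY) zero_le
    have : P s ≤ P (⋃ a ∈ s, {a}) := measure_mono (by simp)
    rw [(measure_biUnion_null_iff (Set.to_countable s)).mpr hsing] at this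
    exact le_antisymm this zero_le
  -- the gap function
  set g : (Fin n → ℤ) × (Fin n → ℤ) → ℝ :=
    fun p => L p.1 - (1 / (n : ℝ)) * ∑ j, (if p.1 j ≠ p.2 j then (1 : ℝ) else 0) with hg_def
  have hLHS : ∫ ω, (L (F ω) -
      (1 / (n : ℝ)) * ∑ j, (if F ω j ≠ Y ω j then (1 : ℝ) else 0)) ∂μ = ∫ p, g p ∂P := by
    rw [hP_def, integral_map hFY.aemeasurable (measurable_of_countable g).aestronglyMeasurable]
  set KL : ℝ := ∫ x, llr P Q x ∂P with hKL_def
  have hKL0 : 0 ≤ KL := integral_llr_nonneg hAC (hIntP _)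
  -- MGF bound under Q
  have hmgf : ∀ l : ℝ, ∫ p, Real.exp (l * g p) ∂Q ≤ Real.exp (l ^ 2 / (8 * n)) := by
    intro l
    have hinner : ∀ u : Fin n → ℤ,
        ∫ v, Real.exp (l * g (u, v)) ∂(μ.map Y) ≤ Real.exp (l ^ 2 / (8 * n)) := by
      intro u
      rw [integral_map hY.aemeasurable (measurable_of_countable _).aestronglyMeasurable]
      set pp : Fin n → ℝ := fun j => (μ {ω | Y ω j ≠ u j}).toReal with hpp_def
      have hpp0 : ∀ j, 0 ≤ pp j := fun j => ENNReal.toReal_nonneg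
      have hpp1 : ∀ j, pp j ≤ 1 := by
        intro j
        rw [hpp_def]
        have h1 : μ {ω | Y ω j ≠ u j} ≤ 1 := prob_le_one
        have h2 := ENNReal.toReal_mono (by simp) h1
        simpa using h2
      set X : Fin n → Ω → ℝ :=
        fun j ω => (1 / (n : ℝ)) * (pp j - (if u j ≠ Y ω j then (1 : ℝ) else 0)) with hX_def
      have hXmeas : ∀ j, Measurable (X j) := by
        intro j
        have : X j = (fun z : ℤ => (1 / (n : ℝ)) * (pp j - (if u j ≠ z then (1 : ℝ) else 0))) ∘
            (fun ω => Y ω j) := rfl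
        rw [this]
        exact (measurable_of_countable _).comp ((measurable_pi_apply j).comp hY)
      have hXindep : iIndepFun X μ :=
        hindep.comp
          (fun j (z : ℤ) => (1 / (n : ℝ)) * (pp j - (if u j ≠ z then (1 : ℝ) else 0)))
          (fun j => measurable_of_countable _)
      have hgeq : ∀ ω, l * g (u, Y ω) = l * ∑ j, X j ω := by
        intro ω
        rw [hg_def]
        simp only [hX_def]
        rw [hL u, ← Finset.mul_sum, Finset.sum_sub_distrib]
        ring
      have hsingle : ∀ j, ProbabilityTheory.mgf (X j) μ l ≤ Real.exp (l ^ 2 / (8 * (n : ℝ) ^ 2)) := by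
        intro j
        set A : Set Ω := {ω | Y ω j ≠ u j} with hA_def
        have hAmeas : MeasurableSet A :=
          ((measurable_pi_apply j).comp hY) ((Set.to_countable {z : ℤ | z ≠ u j}).measurableSet)
        have hint : Integrable (fun ω => Real.exp (l * X j ω)) μ := by
          refine Integrable.mono' (integrable_const (max (Real.exp (l * ((1 / (n : ℝ)) * (pp j - 1))))
            (Real.exp (l * ((1 / (n : ℝ)) * pp j))))) ?_ (ae_of_all _ ?_)
          · exact (((hXmeas j).const_mul l).exp).aestronglyMeasurable
          · intro ω
            rw [Real.norm_eq_abs, abs_of_pos (Real.exp_pos _), hX_def]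
            simp only
            by_cases h : u j ≠ Y ω j
            · rw [if_pos h]; exact le_max_left _ _
            · rw [if_neg h]; simpa using le_max_right _ _
        have hAc : ∀ ω, ω ∈ A ↔ (u j ≠ Y ω j) := fun ω => ne_comm
        have hsplit : ∫ ω, Real.exp (l * X j ω) ∂μ
            = pp j * Real.exp ((l / (n : ℝ)) * (pp j - 1))
              + (1 - pp j) * Real.exp ((l / (n : ℝ)) * pp j) := by
          rw [← integral_add_compl hAmeas hint]
          have h1 : ∫ ω in A, Real.exp (l * X j ω) ∂μ
              = pp j * Real.exp ((l / (n : ℝ)) * (pp j - 1)) := by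
            rw [setIntegral_congr_fun hAmeas
              (g := fun _ => Real.exp ((l / (n : ℝ)) * (pp j - 1))) ?_]
            · rw [setIntegral_const, smul_eq_mul]
              rfl
            · intro ω hω
              have h' : u j ≠ Y ω j := (hAc ω).mp hω
              simp only [hX_def, if_pos h']
              congr 1
              ring
          have h2 : ∫ ω in Aᶜ, Real.exp (l * X j ω) ∂μ
              = (1 - pp j) * Real.exp ((l / (n : ℝ)) * pp j) := by
            rw [setIntegral_congr_fun hAmeas.compl
              (g := fun _ => Real.exp ((l / (n : ℝ)) * pp j)) ?_]
            · rw [setIntegral_const, smul_eq_mul]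
              congr 1
              rw [probReal_compl_eq_one_sub hAmeas]
              simp [hpp_def]
              rfl
            · intro ω hω
              have h' : ¬ (u j ≠ Y ω j) := fun h => hω ((hAc ω).mpr h)
              simp only [hX_def, if_neg h']
              congr 1
              ring
          rw [h1, h2]
        have hbern := bernoulli_mgf_le (pp j) (l / (n : ℝ)) (hpp0 j) (hpp1 j)
        have : ProbabilityTheory.mgf (X j) μ l = ∫ ω, Real.exp (l * X j ω) ∂μ := rfl
        rw [this, hsplit]
        calc pp j * Real.exp ((l / (n : ℝ)) * (pp j - 1))
              + (1 - pp j) * Real.exp ((l / (n : ℝ)) * pp j)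
            = (1 - pp j) * Real.exp (pp j * (l / (n : ℝ)))
              + pp j * Real.exp ((pp j - 1) * (l / (n : ℝ))) := by ring_nf
          _ ≤ Real.exp ((l / (n : ℝ)) ^ 2 / 8) := hbern
          _ = Real.exp (l ^ 2 / (8 * (n : ℝ) ^ 2)) := by
              congr 1
              rw [div_pow]
              ring
        -- done single
      calc ∫ ω, Real.exp (l * g (u, Y ω)) ∂μ
          = ∫ ω, Real.exp (l * ∑ j, X j ω) ∂μ := by
            refine integral_congr_ae (ae_of_all _ (fun ω => ?_))
            exact congrArg Real.exp (hgeq ω)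
        _ = ProbabilityTheory.mgf (∑ j, X j) μ l := by
            rw [ProbabilityTheory.mgf]
            refine integral_congr_ae (ae_of_all _ (fun ω => ?_))
            simp [Finset.sum_apply]
        _ = ∏ j, ProbabilityTheory.mgf (X j) μ l :=
            ProbabilityTheory.iIndepFun.mgf_sum hXindep hXmeas Finset.univ
        _ ≤ ∏ j : Fin n, Real.exp (l ^ 2 / (8 * (n : ℝ) ^ 2)) :=
            Finset.prod_le_prod (fun j _ => ProbabilityTheory.mgf_nonneg)
              (fun j _ => hsingle j)
        _ = Real.exp (l ^ 2 / (8 * n)) := by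
            rw [Finset.prod_const, Finset.card_univ, Fintype.card_fin, ← Real.exp_nat_mul]
            congr 1
            field_simp
    have hQint : Integrable (fun p => Real.exp (l * g p)) Q := hIntQ _
    calc ∫ p, Real.exp (l * g p) ∂Q
        = ∫ u, ∫ v, Real.exp (l * g (u, v)) ∂(μ.map Y) ∂(μ.map F) := by
          rw [hQ_def] at hQint ⊢
          exact MeasureTheory.integral_prod _ hQint
      _ ≤ ∫ u, Real.exp (l ^ 2 / (8 * n)) ∂(μ.map F) := by
          refine integral_mono ?_ (integrable_const _) hinner
          exact integrable_of_null_compl _ hSfin hF0 _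
      _ = Real.exp (l ^ 2 / (8 * n)) := by simp
  -- Donsker-Varadhan and optimization
  have hDV : ∀ l : ℝ, 0 < l → ∫ p, g p ∂P ≤ (KL + l ^ 2 / (8 * n)) / l := by
    intro l hl
    have hdv := donsker_varadhan_le hAC (fun p => l * g p) (hIntP _) (hIntQ _) (hIntP _) (hIntP _)
    rw [MeasureTheory.integral_const_mul] at hdv
    have hlog : Real.log (∫ p, Real.exp (l * g p) ∂Q) ≤ l ^ 2 / (8 * n) := by
      have hpos : 0 < ∫ p, Real.exp (l * g p) ∂Q := integral_exp_pos (hIntQ _)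
      calc Real.log (∫ p, Real.exp (l * g p) ∂Q)
          ≤ Real.log (Real.exp (l ^ 2 / (8 * n))) := Real.log_le_log hpos (hmgf l)
        _ = l ^ 2 / (8 * n) := Real.log_exp _
    rw [le_div_iff₀ hl, mul_comm]
    calc l * ∫ p, g p ∂P ≤ KL + Real.log (∫ p, Real.exp (l * g p) ∂Q) := hdv
      _ ≤ KL + l ^ 2 / (8 * n) := by linarith
  rw [hLHS]
  have hMI : mutualInfo μ F Y = KL := rfl
  rw [hMI]
  rcases hKL0.eq_or_lt with h0 | hKLpos
  · have hle : ∫ p, g p ∂P ≤ 0 := by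
      by_contra hcon
      push_neg at hcon
      have hc : 0 < ∫ p, g p ∂P := hcon
      set c := ∫ p, g p ∂P with hc_def
      have hl4 : (0 : ℝ) < 4 * n * c := by positivity
      have := hDV (4 * n * c) hl4
      rw [← h0] at this
      have heq : ((0 : ℝ) + (4 * n * c) ^ 2 / (8 * n)) / (4 * n * c) = c / 2 := by
        field_simp
        ring
      rw [heq] at this
      linarith
    exact hle.trans (Real.sqrt_nonneg _)
  · set l : ℝ := Real.sqrt (8 * n * KL) with hl_def
    have hl8 : (0 : ℝ) < 8 * n * KL := by positivity
    have hl : 0 < l := Real.sqrt_pos.mpr hl8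
    have hsq : l ^ 2 = 8 * n * KL := Real.sq_sqrt hl8.le
    have hkey : (KL + l ^ 2 / (8 * n)) / l = Real.sqrt (KL / (2 * n)) := by
      rw [hsq]
      have h8 : (8 * (n : ℝ) * KL) / (8 * n) = KL := by field_simp
      rw [h8, div_eq_iff hl.ne', hl_def, ← Real.sqrt_mul (by positivity)]
      have harg : KL / (2 * (n : ℝ)) * (8 * n * KL) = (2 * KL) ^ 2 := by
        field_simp
        ring
      rw [harg, Real.sqrt_sq (by positivity)]
      ring
    rw [← hkey]
    exact hDV l hl
end
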